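/- arXiv:1912.02683 — 5 statements merged into one kernel-verified Lean document; each statement's English description precedes it below -/
import Mathlib

section
/- Let G₁ and G₂ be connected graphs and let G₁ ∗ G₂ be a tree amalgamation with nonempty adhesion sets and of finite identification. Then the canonical map π : V(G₁+G₂) → V(G₁∗G₂), which sends each vertex of G₁+G₂ to the vertex of G₁∗G₂ obtained from it after contracting all added edges, is a quasi-isometry with respect to the path metrics of G₁+G₂ and G₁∗G₂. -/
noncomputable section

/-- A family of subsets is *uniformly bounded* with respect to the distance `d` if there is a
common bound on the diameters of its members. -/
def UnifBdd {X : Type*} (d : X → X → ℝ) (𝒱 : Set (Set X)) : Prop :=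
  ∃ D : ℝ, ∀ V ∈ 𝒱, ∀ x ∈ V, ∀ y ∈ V, d x y ≤ D

/-- A family of subsets is a *cover* of `X`. -/
def IsCover {X : Type*} (𝒱 : Set (Set X)) : Prop :=
  ∀ x : X, ∃ V ∈ 𝒱, x ∈ V

/-- A set is *open* with respect to the distance `d` (for a metric space with `d = dist` this is
ordinary openness). -/
def DOpen {X : Type*} (d : X → X → ℝ) (U : Set X) : Prop :=
  ∀ x ∈ U, ∃ ε > (0 : ℝ), ∀ y, d x y < ε → y ∈ U

/-- A family of subsets has *multiplicity at most `m`*: no point belongs to more than `m` of its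
members. -/
def MultLE {X : Type*} (𝒱 : Set (Set X)) (m : ℕ) : Prop :=
  ∀ x : X, ∀ F : Finset (Set X), (∀ V ∈ F, V ∈ 𝒱 ∧ x ∈ V) → F.card ≤ m

/-- `𝒰` *refines* `𝒱` if every member of `𝒰` is contained in some member of `𝒱`. -/
def Refines {X : Type*} (𝒰 𝒱 : Set (Set X)) : Prop :=
  ∀ U ∈ 𝒰, ∃ V ∈ 𝒱, U ⊆ V

/-- A family of subsets is *`r`-disjoint*: distinct members are at distance at least `r`. -/
def RDisjoint {X : Type*} (d : X → X → ℝ) (r : ℝ) (𝒱 : Set (Set X)) : Prop :=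
  ∀ V ∈ 𝒱, ∀ W ∈ 𝒱, V ≠ W → ∀ x ∈ V, ∀ y ∈ W, r ≤ d x y

/-- `X` (with distance `d`) has *asymptotic dimension at most `n`*: every uniformly bounded open
cover is refined by ... i.e. for every uniformly bounded open cover `𝒱` there is a uniformly
bounded open cover `𝒰` of multiplicity at most `n + 1` which `𝒱` refines. -/
def AsdimLE {X : Type*} (d : X → X → ℝ) (n : ℕ) : Prop :=
  ∀ 𝒱 : Set (Set X), IsCover 𝒱 → UnifBdd d 𝒱 → (∀ V ∈ 𝒱, DOpen d V) →
    ∃ 𝒰 : Set (Set X), IsCover 𝒰 ∧ UnifBdd d 𝒰 ∧ (∀ U ∈ 𝒰, DOpen d U) ∧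
      MultLE 𝒰 (n + 1) ∧ Refines 𝒱 𝒰

/-- The *asymptotic dimension* of `X` with distance `d`, as an extended natural number:
the least `n` with `AsdimLE d n`, and `⊤` if there is no such `n`. -/
def asdim {X : Type*} (d : X → X → ℝ) : ℕ∞ :=
  sInf {k : ℕ∞ | ∃ m : ℕ, k = (m : ℕ∞) ∧ AsdimLE d m}
/-- The path metric (graph distance) of a graph, as a real-valued distance function on the
vertex set. -/
def graphDist {V : Type*} (G : SimpleGraph V) : V → V → ℝ :=
  fun x y => (G.dist x y : ℝ)

/-- A graph is locally finite if every vertex has finite degree. -/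
def LocFinite {V : Type*} (G : SimpleGraph V) : Prop :=
  ∀ v : V, (G.neighborSet v).Finite

/-- A group action on a graph via a homomorphism-like map `ρ` into permutations of the vertex
set: every `ρ γ` is an automorphism of the graph. -/
def IsGraphAction {V Γ : Type*} (G : SimpleGraph V) (ρ : Γ → Equiv.Perm V) : Prop :=
  ∀ (γ : Γ) (x y : V), G.Adj (ρ γ x) (ρ γ y) ↔ G.Adj x y

/-- The action given by `ρ` is quasi-transitive: it has finitely many orbits on the vertex set. -/
def QuasiTransitiveAction {V Γ : Type*} (ρ : Γ → Equiv.Perm V) : Prop :=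
  ∃ F : Finset V, ∀ x : V, ∃ y ∈ F, ∃ γ : Γ, ρ γ y = x
/-- The data of a tree amalgamation of two graphs `G₁` and `G₂`: disjoint index sets `I₁`, `I₂`
(realised as two different types), families of adhesion sets `S₁`, `S₂`, bonding bijections
`bond k ℓ : S₁ k → S₂ ℓ` (the map `φ_{ℓk}` being its inverse), an `(|I₁|,|I₂|)`-semiregular
connecting tree `T` with canonical bipartition given by `side`, and a labelling of the directed
edges of `T` such that each label at a vertex occurs exactly once (encoded by the equivalences
`lab₁`, `lab₂` between the neighbourhood of a vertex and the corresponding index set; this also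
encodes the semiregularity of `T`). -/
structure TreeAmalg {V₁ V₂ : Type} (G₁ : SimpleGraph V₁) (G₂ : SimpleGraph V₂) where
  I₁ : Type
  I₂ : Type
  S₁ : I₁ → Set V₁
  S₂ : I₂ → Set V₂
  bond : I₁ → I₂ → V₁ → V₂
  bondBij : ∀ k ℓ, Set.BijOn (bond k ℓ) (S₁ k) (S₂ ℓ)
  VT : Type
  T : SimpleGraph VT
  treeT : T.IsTree
  side : VT → Bool
  bipart : ∀ ⦃u v : VT⦄, T.Adj u v → side u ≠ side v
  lab₁ : ∀ u : VT, side u = true → (T.neighborSet u ≃ I₁)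
  lab₂ : ∀ u : VT, side u = false → (T.neighborSet u ≃ I₂)

namespace TreeAmalg

variable {V₁ V₂ : Type} {G₁ : SimpleGraph V₁} {G₂ : SimpleGraph V₂}

/-- The vertex set of the graph `G₁ + G₂`: the disjoint union of a copy of `G₁` for every node
of `T` on side `1` and a copy of `G₂` for every node of `T` on side `2`. -/
abbrev PlusV (A : TreeAmalg G₁ G₂) : Type :=
  ({u : A.VT // A.side u = true} × V₁) ⊕ ({u : A.VT // A.side u = false} × V₂)

/-- The node of the connecting tree to whose copy a vertex of `G₁ + G₂` belongs. -/
def nodeOf (A : TreeAmalg G₁ G₂) : A.PlusV → A.VT :=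
  Sum.elim (fun p => p.1.1) (fun p => p.1.1)

/-- Edges within the copies of `G₁` and `G₂`. -/
def copyRel (A : TreeAmalg G₁ G₂) : A.PlusV → A.PlusV → Prop :=
  fun p q =>
    match p, q with
    | Sum.inl (u, x), Sum.inl (u', x') => u = u' ∧ G₁.Adj x x'
    | Sum.inr (v, y), Sum.inr (v', y') => v = v' ∧ G₂.Adj y y'
    | _, _ => False

/-- The new edges added between the copies: for a directed edge `uv` of `T` with labels
`k = f(uv)` and `ℓ = f(vu)`, an edge between each `x ∈ S^u_k` and `φ_{kℓ}(x) ∈ S^v_ℓ`. -/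
def crossRel (A : TreeAmalg G₁ G₂) : A.PlusV → A.PlusV → Prop :=
  fun p q =>
    match p, q with
    | Sum.inl (u, x), Sum.inr (v, y) =>
        ∃ h : A.T.Adj u.1 v.1,
          x ∈ A.S₁ (A.lab₁ u.1 u.2 ⟨v.1, h⟩) ∧
          y = A.bond (A.lab₁ u.1 u.2 ⟨v.1, h⟩) (A.lab₂ v.1 v.2 ⟨u.1, h.symm⟩) x
    | _, _ => False

/-- The graph `G₁ + G₂`. -/
def Plus (A : TreeAmalg G₁ G₂) : SimpleGraph A.PlusV :=
  SimpleGraph.fromRel (fun p q => A.copyRel p q ∨ A.crossRel p q)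

/-- The vertex set of the tree amalgamation `G₁ ∗ G₂`: obtained from `G₁ + G₂` by contracting
all the added (cross) edges, i.e. the quotient by the equivalence relation generated by the
cross edges. -/
def StarV (A : TreeAmalg G₁ G₂) : Type :=
  Quotient (Relation.EqvGen.setoid A.crossRel)

/-- The canonical map `π : V(G₁ + G₂) → V(G₁ ∗ G₂)`. -/
def proj (A : TreeAmalg G₁ G₂) : A.PlusV → A.StarV :=
  Quotient.mk (Relation.EqvGen.setoid A.crossRel)

/-- The tree amalgamation `G₁ ∗ G₂`: the graph obtained from `G₁ + G₂` by contracting all the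
cross edges. -/
def Star (A : TreeAmalg G₁ G₂) : SimpleGraph A.StarV :=
  SimpleGraph.fromRel (fun a b => ∃ p q : A.PlusV, A.proj p = a ∧ A.proj q = b ∧ A.Plus.Adj p q)

/-- The adhesion set of `G₁ ∗ G₂` coming from the copy of `S¹_k` in the copy of `G₁`
at the node `u` of `T`. -/
def adhesion₁ (A : TreeAmalg G₁ G₂) (u : {u : A.VT // A.side u = true}) (k : A.I₁) :
    Set A.StarV :=
  A.proj '' {p : A.PlusV | ∃ x ∈ A.S₁ k, p = Sum.inl (u, x)}

/-- The adhesion set of `G₁ ∗ G₂` coming from the copy of `S²_ℓ` in the copy of `G₂`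
at the node `v` of `T`. -/
def adhesion₂ (A : TreeAmalg G₁ G₂) (v : {v : A.VT // A.side v = false}) (ℓ : A.I₂) :
    Set A.StarV :=
  A.proj '' {p : A.PlusV | ∃ y ∈ A.S₂ ℓ, p = Sum.inr (v, y)}

/-- `C` is an adhesion set of the tree amalgamation `G₁ ∗ G₂`. -/
def IsAdhesionSet (A : TreeAmalg G₁ G₂) (C : Set A.StarV) : Prop :=
  (∃ u k, C = A.adhesion₁ u k) ∨ (∃ v ℓ, C = A.adhesion₂ v ℓ)

/-- All adhesion sets of the tree amalgamation are nonempty. -/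
def NonemptyAdhesions (A : TreeAmalg G₁ G₂) : Prop :=
  (∀ k, (A.S₁ k).Nonempty) ∧ (∀ ℓ, (A.S₂ ℓ).Nonempty)

/-- The tree amalgamation has finite adhesion: all adhesion sets are finite. -/
def FiniteAdhesion (A : TreeAmalg G₁ G₂) : Prop :=
  (∀ k, (A.S₁ k).Finite) ∧ (∀ ℓ, (A.S₂ ℓ).Finite)

/-- The tree amalgamation has finite identification: the identification sizes of all vertices of
`G₁ ∗ G₂` (the number of nodes of `T` whose copies contain a vertex mapping to the given vertex
under `π`) are bounded. -/
def FiniteIdentification (A : TreeAmalg G₁ G₂) : Prop :=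
  ∃ N : ℕ, ∀ a : A.StarV,
    {u : A.VT | ∃ p : A.PlusV, A.proj p = a ∧ A.nodeOf p = u}.Finite ∧
    {u : A.VT | ∃ p : A.PlusV, A.proj p = a ∧ A.nodeOf p = u}.ncard ≤ N

/-- The tree amalgamation is trivial: for some node `v` of `T` the restriction of `π` to the
copy of the corresponding graph at `v` is a bijection onto `V(G₁ ∗ G₂)`. -/
def IsTrivial (A : TreeAmalg G₁ G₂) : Prop :=
  ∃ v : A.VT, Set.BijOn A.proj {p : A.PlusV | A.nodeOf p = v} Set.univ

section Actions

variable {Γ₁ Γ₂ : Type} [Group Γ₁] [Group Γ₂]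

/-- The tree amalgamation respects `Γ₁` (acting on `G₁` via `ρ₁`): for every `γ ∈ Γ₁` there is a
permutation `σ` of `I₁` such that for every `k ∈ I₁` there are `ℓ ∈ I₂` and `τ` in the setwise
stabiliser of `S₂ ℓ` in `Γ₂` with `φ_{kℓ} = τ ∘ φ_{σ(k)ℓ} ∘ γ|_{S₁ k}`. -/
def Respects₁ (A : TreeAmalg G₁ G₂) (ρ₁ : Γ₁ → Equiv.Perm V₁) (ρ₂ : Γ₂ → Equiv.Perm V₂) :
    Prop :=
  ∀ γ : Γ₁, ∃ σ : Equiv.Perm A.I₁, ∀ k : A.I₁, ∃ ℓ : A.I₂, ∃ τ : Γ₂,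
    (fun z => ρ₂ τ z) '' A.S₂ ℓ = A.S₂ ℓ ∧
    ∀ x ∈ A.S₁ k, ρ₁ γ x ∈ A.S₁ (σ k) ∧ A.bond k ℓ x = ρ₂ τ (A.bond (σ k) ℓ (ρ₁ γ x))

/-- The tree amalgamation respects `Γ₂` (acting on `G₂` via `ρ₂`); here the bonding maps
`φ_{ℓk} : S₂ ℓ → S₁ k` are the inverses of the maps `bond k ℓ`, so the condition
`φ_{ℓk} = τ ∘ φ_{σ(ℓ)k} ∘ γ|_{S₂ ℓ}` is expressed via `bond`. -/
def Respects₂ (A : TreeAmalg G₁ G₂) (ρ₁ : Γ₁ → Equiv.Perm V₁) (ρ₂ : Γ₂ → Equiv.Perm V₂) :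
    Prop :=
  ∀ γ : Γ₂, ∃ σ : Equiv.Perm A.I₂, ∀ ℓ : A.I₂, ∃ k : A.I₁, ∃ τ : Γ₁,
    (fun z => ρ₁ τ z) '' A.S₁ k = A.S₁ k ∧
    (∀ y ∈ A.S₂ ℓ, ρ₂ γ y ∈ A.S₂ (σ ℓ)) ∧
    ∀ x ∈ A.S₁ k, ∀ x' ∈ A.S₁ k,
      A.bond k (σ ℓ) x' = ρ₂ γ (A.bond k ℓ x) → x = ρ₁ τ x'

/-- The bonding maps from `I₁` to `I₂` are consistent. -/
def Cons₁₂ (A : TreeAmalg G₁ G₂) (ρ₂ : Γ₂ → Equiv.Perm V₂) : Prop :=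
  ∀ k : A.I₁, ∀ ℓ ℓ' : A.I₂, ∃ γ : Γ₂, ∀ x ∈ A.S₁ k, A.bond k ℓ x = ρ₂ γ (A.bond k ℓ' x)

/-- The bonding maps from `I₂` to `I₁` are consistent (expressed via `bond`, whose inverses are
the bonding maps `φ_{ℓk}`). -/
def Cons₂₁ (A : TreeAmalg G₁ G₂) (ρ₁ : Γ₁ → Equiv.Perm V₁) : Prop :=
  ∀ ℓ : A.I₂, ∀ k k' : A.I₁, ∃ γ : Γ₁, ∀ x ∈ A.S₁ k, ∀ x' ∈ A.S₁ k',
    A.bond k' ℓ x' = A.bond k ℓ x → x = ρ₁ γ x'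

/-- The tree amalgamation is of Type 1 respecting the actions of `Γ₁` and `Γ₂`. -/
def Type1 (A : TreeAmalg G₁ G₂) (ρ₁ : Γ₁ → Equiv.Perm V₁) (ρ₂ : Γ₂ → Equiv.Perm V₂) : Prop :=
  A.Respects₁ ρ₁ ρ₂ ∧ A.Respects₂ ρ₁ ρ₂ ∧ A.Cons₁₂ ρ₂ ∧ A.Cons₂₁ ρ₁

/-- The tree amalgamation is of Type 2 respecting the actions: `G₁ = G₂`, `Γ₁ = Γ₂` and
`I₁ = I₂` (witnessed by identifications `eV`, `eΓ`, `eI` compatible with the actions and the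
adhesion sets), there is `J ⊆ I` such that for every edge of `T` the label of one orientation
lies in `J` iff the label of the other does not, the tree amalgamation respects `Γ`, and the
bonding maps between `J` and `I ∖ J` are consistent. -/
def Type2 (A : TreeAmalg G₁ G₂) (ρ₁ : Γ₁ → Equiv.Perm V₁) (ρ₂ : Γ₂ → Equiv.Perm V₂) : Prop :=
  ∃ (eV : G₁ ≃g G₂) (eΓ : Γ₁ ≃* Γ₂) (eI : A.I₁ ≃ A.I₂),
    (∀ (γ : Γ₁) (x : V₁), eV (ρ₁ γ x) = ρ₂ (eΓ γ) (eV x)) ∧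
    (∀ k : A.I₁, A.S₂ (eI k) = (fun x => eV x) '' A.S₁ k) ∧
    A.Respects₁ ρ₁ ρ₂ ∧ A.Respects₂ ρ₁ ρ₂ ∧
    ∃ J : Set A.I₁,
      (∀ (u v : A.VT) (h : A.T.Adj u v) (hu : A.side u = true) (hv : A.side v = false),
        A.lab₁ u hu ⟨v, h⟩ ∈ J ↔ eI.symm (A.lab₂ v hv ⟨u, h.symm⟩) ∉ J) ∧
      (∀ k ∈ J, ∀ ℓ ℓ' : A.I₂, eI.symm ℓ ∉ J → eI.symm ℓ' ∉ J →
        ∃ γ : Γ₂, ∀ x ∈ A.S₁ k, A.bond k ℓ x = ρ₂ γ (A.bond k ℓ' x)) ∧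
      (∀ ℓ : A.I₂, eI.symm ℓ ∉ J → ∀ k ∈ J, ∀ k' ∈ J,
        ∃ γ : Γ₁, ∀ x ∈ A.S₁ k, ∀ x' ∈ A.S₁ k',
          A.bond k' ℓ x' = A.bond k ℓ x → x = ρ₁ γ x')

/-- The tree amalgamation respects the actions of `Γ₁` and `Γ₂` (given via `ρ₁`, `ρ₂`):
it is of Type 1 or of Type 2. -/
def RespectsActions (A : TreeAmalg G₁ G₂) (ρ₁ : Γ₁ → Equiv.Perm V₁)
    (ρ₂ : Γ₂ → Equiv.Perm V₂) : Prop :=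
  A.Type1 ρ₁ ρ₂ ∨ A.Type2 ρ₁ ρ₂

end Actions

end TreeAmalg
namespace TreeAmalg
variable {V₁ V₂ : Type} {G₁ : SimpleGraph V₁} {G₂ : SimpleGraph V₂}

lemma crossRel_ne {A : TreeAmalg G₁ G₂} {p q : A.PlusV} (h : A.crossRel p q) : p ≠ q := by
  cases p with
  | inl p => cases q with
    | inl q => exact absurd h (by simp [crossRel])
    | inr q => exact fun h' => by cases h'
  | inr p => exact absurd h (by simp [crossRel])

lemma crossRel_adj {A : TreeAmalg G₁ G₂} {p q : A.PlusV} (h : A.crossRel p q) :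
    A.T.Adj (A.nodeOf p) (A.nodeOf q) := by
  cases p with
  | inl p => cases q with
    | inl q => exact absurd h (by simp [crossRel])
    | inr q => obtain ⟨h, -, -⟩ := h; exact h
  | inr p => exact absurd h (by simp [crossRel])

lemma cross_unique {A : TreeAmalg G₁ G₂} {r r' r'' : A.PlusV}
    (h1 : A.crossRel r r' ∨ A.crossRel r' r) (h2 : A.crossRel r'' r' ∨ A.crossRel r' r'')
    (hn : A.nodeOf r = A.nodeOf r'') : r = r'' := by
  rcases r with ⟨u, x⟩ | ⟨v, y⟩
  · -- r = inl
    rcases r' with ⟨u', x'⟩ | ⟨v', y'⟩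
    · exact absurd h1 (by simp [crossRel])
    · -- r' = inr (v', y')
      have h1' : A.crossRel (Sum.inl (u, x)) (Sum.inr (v', y')) := by
        rcases h1 with h | h
        · exact h
        · exact absurd h (by simp [crossRel])
      rcases r'' with ⟨u'', x''⟩ | ⟨v'', y''⟩
      · have h2' : A.crossRel (Sum.inl (u'', x'')) (Sum.inr (v', y')) := by
          rcases h2 with h | h
          · exact h
          · exact absurd h (by simp [crossRel])
        have hu : u = u'' := Subtype.ext hn
        subst hu
        obtain ⟨hadj, hx, hy⟩ := h1'
        obtain ⟨hadj', hx', hy'⟩ := h2'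
        have : x = x'' := by
          have hpe : (⟨v'.1, hadj'⟩ : A.T.neighborSet u.1) = ⟨v'.1, hadj⟩ := rfl
          rw [hpe] at hx' hy'
          exact (A.bondBij _ _).injOn hx hx' (hy ▸ hy')
        rw [this]
      · exact absurd h2 (by simp [crossRel])
  · -- r = inr (v, y)
    rcases r' with ⟨u', x'⟩ | ⟨v', y'⟩
    · have h1' : A.crossRel (Sum.inl (u', x')) (Sum.inr (v, y)) := by
        rcases h1 with h | h
        · exact absurd h (by simp [crossRel])
        · exact h
      rcases r'' with ⟨u'', x''⟩ | ⟨v'', y''⟩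
      · exact absurd h2 (by simp [crossRel])
      · have h2' : A.crossRel (Sum.inl (u', x')) (Sum.inr (v'', y'')) := by
          rcases h2 with h | h
          · exact absurd h (by simp [crossRel])
          · exact h
        have hv : v = v'' := Subtype.ext hn
        subst hv
        obtain ⟨hadj, hx, hy⟩ := h1'
        obtain ⟨hadj', hx', hy'⟩ := h2'
        have : y = y'' := by rw [hy, hy']
        rw [this]
    · exact absurd h1 (by simp [crossRel])

end TreeAmalg
open SimpleGraph in
lemma isPath_concat' {V : Type*} {G : SimpleGraph V} {u v w : V} {p : G.Walk u v}
    (hp : p.IsPath) (h : G.Adj v w) (hw : w ∉ p.support) : (p.concat h).IsPath := by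
  have : (p.concat h).reverse.IsPath := by
    rw [SimpleGraph.Walk.reverse_concat]
    exact hp.reverse.cons (by simpa using hw)
  have h2 := this.reverse
  rw [SimpleGraph.Walk.reverse_reverse] at h2
  exact h2

open SimpleGraph in
lemma getVert_ne_of_isPath {V : Type*} {G : SimpleGraph V} {u v : V} (p : G.Walk u v)
    (hp : p.IsPath) : ∀ i j, i < j → j ≤ p.length → p.getVert i ≠ p.getVert j := by
  induction p with
  | nil =>
    intro i j hij hj
    exact absurd (Nat.lt_of_lt_of_le hij hj) (by simp)
  | @cons a b c h q ih =>
    intro i j hij hj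
    rw [SimpleGraph.Walk.cons_isPath_iff] at hp
    match i, j with
    | 0, (j+1) =>
      simp only [Walk.getVert_zero, Walk.getVert_cons_succ]
      intro he
      exact hp.2 (he ▸ Walk.mem_support_iff_exists_getVert.mpr
        ⟨j, rfl, by simpa using Nat.succ_le_succ_iff.mp hj⟩)
    | (i+1), (j+1) =>
      simp only [Walk.getVert_cons_succ]
      exact ih hp.1 i j (by omega) (by simpa using Nat.succ_le_succ_iff.mp hj)
namespace TreeAmalg
variable {V₁ V₂ : Type} {G₁ : SimpleGraph V₁} {G₂ : SimpleGraph V₂}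

lemma walk_parity (A : TreeAmalg G₁ G₂) {u v : A.VT} (W : A.T.Walk u v) :
    (A.side u = A.side v ↔ W.length % 2 = 0) := by
  induction W with
  | nil => simp
  | @cons a b c h q ih =>
    have hab : A.side a ≠ A.side b := A.bipart h
    simp only [SimpleGraph.Walk.length_cons]
    cases hsa : A.side a <;> cases hsb : A.side b <;> cases hsc : A.side c <;>
      simp_all <;> omega

lemma dist_parity (A : TreeAmalg G₁ G₂) (u v : A.VT) :
    (A.side u = A.side v ↔ A.T.dist u v % 2 = 0) := by
  obtain ⟨W, hW⟩ := A.treeT.isConnected.exists_walk_length_eq_dist u v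
  rw [← hW]; exact A.walk_parity W

lemma adj_dist (A : TreeAmalg G₁ G₂) {x y : A.VT} (u : A.VT) (h : A.T.Adj x y) :
    A.T.dist u y = A.T.dist u x + 1 ∨ A.T.dist u x = A.T.dist u y + 1 := by
  have h1 : A.T.dist u y ≤ A.T.dist u x + 1 := by
    calc A.T.dist u y ≤ A.T.dist u x + A.T.dist x y := A.treeT.isConnected.dist_triangle
    _ = A.T.dist u x + 1 := by rw [SimpleGraph.dist_eq_one_iff_adj.mpr h]
  have h2 : A.T.dist u x ≤ A.T.dist u y + 1 := by
    calc A.T.dist u x ≤ A.T.dist u y + A.T.dist y x := A.treeT.isConnected.dist_triangle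
    _ = A.T.dist u y + 1 := by rw [SimpleGraph.dist_eq_one_iff_adj.mpr h.symm]
  have hne : A.T.dist u x ≠ A.T.dist u y := by
    intro he
    have p1 := A.dist_parity u x
    have p2 := A.dist_parity u y
    rw [he] at p1
    have : A.side x = A.side y := by
      cases hsu : A.side u <;> cases hsx : A.side x <;> cases hsy : A.side y <;>
        simp_all <;> omega
    exact A.bipart h this
  omega

lemma closer_unique (A : TreeAmalg G₁ G₂) {x y y' u : A.VT} (hxy : A.T.Adj x y)
    (hxy' : A.T.Adj x y') (hy : A.T.dist u y < A.T.dist u x)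
    (hy' : A.T.dist u y' < A.T.dist u x) : y = y' := by
  classical
  have hdy : A.T.dist u x = A.T.dist u y + 1 := by
    rcases A.adj_dist u hxy with h | h <;> omega
  have hdy' : A.T.dist u x = A.T.dist u y' + 1 := by
    rcases A.adj_dist u hxy' with h | h <;> omega
  obtain ⟨P, hP, hPl⟩ := (A.treeT.isConnected u y).exists_path_of_dist
  obtain ⟨P', hP', hPl'⟩ := (A.treeT.isConnected u y').exists_path_of_dist
  have hxP : x ∉ P.support := by
    intro hmem
    have := SimpleGraph.Walk.length_takeUntil_le P hmem
    have := SimpleGraph.dist_le (P.takeUntil x hmem)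
    omega
  have hxP' : x ∉ P'.support := by
    intro hmem
    have := SimpleGraph.Walk.length_takeUntil_le P' hmem
    have := SimpleGraph.dist_le (P'.takeUntil x hmem)
    omega
  have hQ : (P.concat hxy.symm).IsPath := isPath_concat' hP hxy.symm hxP
  have hQ' : (P'.concat hxy'.symm).IsPath := isPath_concat' hP' hxy'.symm hxP'
  have huniq := A.treeT.existsUnique_path u x
  have heq : P.concat hxy.symm = P'.concat hxy'.symm :=
    (huniq.unique hQ hQ')
  obtain ⟨hv, -⟩ := SimpleGraph.Walk.concat_inj heq
  exact hv

end TreeAmalg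
namespace TreeAmalg
variable {V₁ V₂ : Type} {G₁ : SimpleGraph V₁} {G₂ : SimpleGraph V₂}

/-- The graph on the vertices of `G₁ + G₂` whose edges are the cross edges. -/
def crossG (A : TreeAmalg G₁ G₂) : SimpleGraph A.PlusV := SimpleGraph.fromRel A.crossRel

lemma crossG_le (A : TreeAmalg G₁ G₂) : A.crossG ≤ A.Plus := by
  intro p q h
  rw [crossG, SimpleGraph.fromRel_adj] at h
  rw [Plus, SimpleGraph.fromRel_adj]
  exact ⟨h.1, h.2.elim (fun h' => Or.inl (Or.inr h')) (fun h' => Or.inr (Or.inr h'))⟩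

lemma crossG_adj_T {A : TreeAmalg G₁ G₂} {p q : A.PlusV} (h : A.crossG.Adj p q) :
    A.T.Adj (A.nodeOf p) (A.nodeOf q) := by
  rw [crossG, SimpleGraph.fromRel_adj] at h
  exact h.2.elim (fun h' => crossRel_adj h') (fun h' => (crossRel_adj h').symm)

lemma proj_eq_of_crossG_adj {A : TreeAmalg G₁ G₂} {p q : A.PlusV} (h : A.crossG.Adj p q) :
    A.proj p = A.proj q := by
  rw [crossG, SimpleGraph.fromRel_adj] at h
  refine Quotient.sound ?_
  exact h.2.elim (fun h' => Relation.EqvGen.rel _ _ h')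
    (fun h' => Relation.EqvGen.symm _ _ (Relation.EqvGen.rel _ _ h'))

/-- The node set of a vertex of the amalgamation. -/
def nodeSet (A : TreeAmalg G₁ G₂) (a : A.StarV) : Set A.VT :=
  {u : A.VT | ∃ p : A.PlusV, A.proj p = a ∧ A.nodeOf p = u}

lemma path_length_le (A : TreeAmalg G₁ G₂) {N : ℕ}
    (hN : ∀ a : A.StarV, (A.nodeSet a).Finite ∧ (A.nodeSet a).ncard ≤ N)
    {p q : A.PlusV} (W : A.crossG.Walk p q) (hW : W.IsPath) : W.length + 1 ≤ N := by
  classical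
  set g : ℕ → A.VT := fun i => A.nodeOf (W.getVert i) with hg
  have hadj : ∀ i, i < W.length → A.T.Adj (g i) (g (i + 1)) :=
    fun i hi => crossG_adj_T (W.adj_getVert_succ hi)
  have hproj : ∀ i, i ≤ W.length → A.proj (W.getVert i) = A.proj p := by
    intro i
    induction i with
    | zero => intro _; rw [W.getVert_zero]
    | succ j ih =>
      intro hj
      rw [← proj_eq_of_crossG_adj (W.adj_getVert_succ (by omega))]
      exact ih (by omega)
  have hS : ∀ i, i < W.length →
      (A.crossRel (W.getVert i) (W.getVert (i+1)) ∨
       A.crossRel (W.getVert (i+1)) (W.getVert i)) := by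
    intro i hi
    exact ((SimpleGraph.fromRel_adj _ _ _).mp (W.adj_getVert_succ hi)).2
  have hnb : ∀ i, i + 2 ≤ W.length → g i ≠ g (i + 2) := by
    intro i hi he
    have h1 := hS i (by omega)
    have h2 := hS (i+1) (by omega)
    have : W.getVert i = W.getVert (i + 2) := by
      refine cross_unique (r' := W.getVert (i+1)) h1 ?_ he
      exact h2.elim (fun h' => Or.inr h') (fun h' => Or.inl h')
    exact getVert_ne_of_isPath W hW i (i+2) (by omega) hi this
  have hdist : ∀ i, i ≤ W.length → A.T.dist (g 0) (g i) = i := by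
    intro i
    induction i using Nat.strong_induction_on with
    | _ i IH =>
      match i with
      | 0 => intro _; exact SimpleGraph.dist_self
      | 1 => intro h1; exact SimpleGraph.dist_eq_one_iff_adj.mpr (hadj 0 (by omega))
      | (j+2) =>
        intro hj
        have d1 := IH (j+1) (by omega) (by omega)
        have d0 := IH j (by omega) (by omega)
        have ha : A.T.Adj (g (j+1)) (g (j+2)) := hadj (j+1) (by omega)
        rcases A.adj_dist (g 0) ha with h | h
        · omega
        · exfalso
          apply hnb j hj
          refine A.closer_unique (x := g (j+1)) (u := g 0) (hadj j (by omega)).symm ha ?_ ?_ <;>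
            omega
  have hinj : Set.InjOn g (Finset.range (W.length + 1) : Set ℕ) := by
    intro i hi j hj he
    have di := hdist i (by simp only [Finset.coe_range, Set.mem_Iio] at hi; omega)
    have dj := hdist j (by simp only [Finset.coe_range, Set.mem_Iio] at hj; omega)
    rw [he] at di
    omega
  have hsub : (Finset.range (W.length + 1)).image g ⊆ (hN (A.proj p)).1.toFinset := by
    intro u hu
    simp only [Finset.mem_image, Finset.mem_range] at hu
    obtain ⟨i, hi, rfl⟩ := hu
    simp only [Set.Finite.mem_toFinset]
    exact ⟨W.getVert i, hproj i (by omega), rfl⟩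
  have hcard : ((Finset.range (W.length + 1)).image g).card = W.length + 1 := by
    rw [Finset.card_image_of_injOn (by simpa using hinj)]
    simp
  calc W.length + 1 = ((Finset.range (W.length + 1)).image g).card := hcard.symm
    _ ≤ (hN (A.proj p)).1.toFinset.card := Finset.card_le_card hsub
    _ = (A.nodeSet (A.proj p)).ncard := (Set.ncard_eq_toFinset_card _ (hN (A.proj p)).1).symm
    _ ≤ N := (hN (A.proj p)).2

lemma walk_of_proj_eq (A : TreeAmalg G₁ G₂) {N : ℕ}
    (hN : ∀ a : A.StarV, (A.nodeSet a).Finite ∧ (A.nodeSet a).ncard ≤ N)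
    {p q : A.PlusV} (h : A.proj p = A.proj q) :
    ∃ W : A.Plus.Walk p q, W.length + 1 ≤ N := by
  have hN1 : 1 ≤ N := by
    have h1 := (hN (A.proj p)).1
    have h2 := (hN (A.proj p)).2
    have hne : (A.nodeSet (A.proj p)).Nonempty := ⟨A.nodeOf p, p, rfl, rfl⟩
    have := (Set.ncard_pos h1).mpr hne
    omega
  classical
  have heqv : Relation.EqvGen A.crossRel p q := Quotient.exact h
  clear h
  have hre : p = q ∨ A.crossG.Reachable p q := by
    induction heqv with
    | rel x y hxy =>
      right
      exact SimpleGraph.Adj.reachable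
        ((SimpleGraph.fromRel_adj _ _ _).mpr ⟨crossRel_ne hxy, Or.inl hxy⟩)
    | refl x => left; rfl
    | symm x y _ ih => exact ih.elim (fun h' => Or.inl h'.symm) (fun h' => Or.inr h'.symm)
    | trans x y z _ _ ih1 ih2 =>
      rcases ih1 with rfl | h1
      · exact ih2
      · rcases ih2 with rfl | h2
        · exact Or.inr h1
        · exact Or.inr (h1.trans h2)
  rcases hre with rfl | hre
  · exact ⟨SimpleGraph.Walk.nil, by simp only [SimpleGraph.Walk.length_nil]; omega⟩
  · obtain ⟨W0⟩ := hre
    have hbd := A.path_length_le hN W0.bypass W0.bypass_isPath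
    refine ⟨W0.bypass.mapLe A.crossG_le, ?_⟩
    simpa using hbd

lemma star_walk_of_plus (A : TreeAmalg G₁ G₂) {p q : A.PlusV} (W : A.Plus.Walk p q) :
    ∃ W' : A.Star.Walk (A.proj p) (A.proj q), W'.length ≤ W.length := by
  induction W with
  | nil => exact ⟨SimpleGraph.Walk.nil, le_refl _⟩
  | @cons a b c h W ih =>
    obtain ⟨W', hW'⟩ := ih
    by_cases he : A.proj a = A.proj b
    · rw [he]
      exact ⟨W', by simp only [SimpleGraph.Walk.length_cons]; omega⟩
    · have hadj : A.Star.Adj (A.proj a) (A.proj b) :=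
        (SimpleGraph.fromRel_adj _ _ _).mpr ⟨he, Or.inl ⟨a, b, rfl, rfl, h⟩⟩
      exact ⟨SimpleGraph.Walk.cons hadj W', by simp only [SimpleGraph.Walk.length_cons]; omega⟩

lemma plus_walk_of_star (A : TreeAmalg G₁ G₂) {N : ℕ}
    (hN : ∀ a : A.StarV, (A.nodeSet a).Finite ∧ (A.nodeSet a).ncard ≤ N) :
    ∀ {a b : A.StarV} (W : A.Star.Walk a b) (p q : A.PlusV),
      A.proj p = a → A.proj q = b →
      ∃ W' : A.Plus.Walk p q, W'.length ≤ (2 * N + 1) * W.length + N := by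
  intro a b W
  induction W with
  | nil =>
    intro p q hp hq
    obtain ⟨W', hW'⟩ := A.walk_of_proj_eq hN (hp.trans hq.symm)
    refine ⟨W', ?_⟩
    simp only [SimpleGraph.Walk.length_nil, Nat.mul_zero, Nat.zero_add]
    omega
  | @cons a a' b h W ih =>
    intro p q hp hq
    rw [Star, SimpleGraph.fromRel_adj] at h
    obtain ⟨hne, hrel⟩ := h
    have : ∃ r r' : A.PlusV, A.proj r = a ∧ A.proj r' = a' ∧ A.Plus.Adj r r' := by
      rcases hrel with ⟨r, r', h1, h2, h3⟩ | ⟨r, r', h1, h2, h3⟩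
      · exact ⟨r, r', h1, h2, h3⟩
      · exact ⟨r', r, h2, h1, h3.symm⟩
    obtain ⟨r, r', hr, hr', hadj⟩ := this
    obtain ⟨W1, hW1⟩ := A.walk_of_proj_eq hN (hp.trans hr.symm)
    obtain ⟨W2, hW2⟩ := ih r' q hr' hq
    refine ⟨W1.append (SimpleGraph.Walk.cons hadj W2), ?_⟩
    rw [SimpleGraph.Walk.length_append, SimpleGraph.Walk.length_cons,
      SimpleGraph.Walk.length_cons]
    have : (2 * N + 1) * (W.length + 1) = (2 * N + 1) * W.length + 2 * N + 1 := by ring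
    omega

end TreeAmalg
/-- `f` is a quasi-isometry from `(X, dX)` to `(Y, dY)`: there are constants `γ ≥ 1` and `c ≥ 0`
with `γ⁻¹ · dX x y − c ≤ dY (f x) (f y) ≤ γ · dX x y + c` for all `x, y`. -/
def IsQuasiIsometryD {X Y : Type*} (dX : X → X → ℝ) (dY : Y → Y → ℝ) (f : X → Y) : Prop :=
  ∃ γ : ℝ, 1 ≤ γ ∧ ∃ c : ℝ, 0 ≤ c ∧ ∀ x y : X,
    γ⁻¹ * dX x y - c ≤ dY (f x) (f y) ∧ dY (f x) (f y) ≤ γ * dX x y + c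

/-- **Remark.** For a tree amalgamation `G₁ ∗ G₂` of connected graphs with nonempty adhesion
sets and of finite identification, the canonical map `π : V(G₁ + G₂) → V(G₁ ∗ G₂)` is a
quasi-isometry with respect to the path metrics. -/
theorem proj_quasiIsometry {V₁ V₂ : Type} {G₁ : SimpleGraph V₁} {G₂ : SimpleGraph V₂}
    (hG₁c : G₁.Connected) (hG₂c : G₂.Connected)
    (A : TreeAmalg G₁ G₂)
    (hne : A.NonemptyAdhesions) (hfi : A.FiniteIdentification) :
    IsQuasiIsometryD (graphDist A.Plus) (graphDist A.Star) A.proj := by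
  obtain ⟨N, hfiN⟩ := hfi
  have hN : ∀ a : A.StarV, (A.nodeSet a).Finite ∧ (A.nodeSet a).ncard ≤ N := hfiN
  have hγpos : (0 : ℝ) < 2 * N + 1 := by positivity
  refine ⟨2 * (N : ℝ) + 1, by nlinarith [Nat.cast_nonneg (α := ℝ) N], (N : ℝ) + 1,
    by positivity, fun x y => ?_⟩
  simp only [graphDist]
  by_cases hreach : A.Plus.Reachable x y
  · obtain ⟨Wp, hWp⟩ := hreach.exists_walk_length_eq_dist
    obtain ⟨Ws', hWs'⟩ := A.star_walk_of_plus Wp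
    have hupper : A.Star.dist (A.proj x) (A.proj y) ≤ A.Plus.dist x y := by
      calc A.Star.dist (A.proj x) (A.proj y) ≤ Ws'.length := SimpleGraph.dist_le Ws'
        _ ≤ Wp.length := hWs'
        _ = A.Plus.dist x y := hWp
    have hsreach : A.Star.Reachable (A.proj x) (A.proj y) := ⟨Ws'⟩
    obtain ⟨Ws, hWs⟩ := hsreach.exists_walk_length_eq_dist
    obtain ⟨Wl, hWl⟩ := A.plus_walk_of_star hN Ws x y rfl rfl
    have hlower : A.Plus.dist x y ≤ (2 * N + 1) * A.Star.dist (A.proj x) (A.proj y) + N := by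
      calc A.Plus.dist x y ≤ Wl.length := SimpleGraph.dist_le Wl
        _ ≤ (2 * N + 1) * Ws.length + N := hWl
        _ = (2 * N + 1) * A.Star.dist (A.proj x) (A.proj y) + N := by rw [hWs]
    have hupR : (A.Star.dist (A.proj x) (A.proj y) : ℝ) ≤ (A.Plus.dist x y : ℝ) := by
      exact_mod_cast hupper
    have hloR : (A.Plus.dist x y : ℝ) ≤
        (2 * N + 1) * (A.Star.dist (A.proj x) (A.proj y) : ℝ) + N := by
      exact_mod_cast hlower
    have hdS0 : (0 : ℝ) ≤ (A.Star.dist (A.proj x) (A.proj y) : ℝ) := Nat.cast_nonneg _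
    have hdP0 : (0 : ℝ) ≤ (A.Plus.dist x y : ℝ) := Nat.cast_nonneg _
    have hN0 : (0 : ℝ) ≤ (N : ℝ) := Nat.cast_nonneg _
    constructor
    · have key : (A.Plus.dist x y : ℝ) ≤
          (2 * (N : ℝ) + 1) * ((A.Star.dist (A.proj x) (A.proj y) : ℝ) + ((N : ℝ) + 1)) := by
        nlinarith
      have h2 := mul_le_mul_of_nonneg_left key (le_of_lt (inv_pos.mpr hγpos))
      rw [← mul_assoc, inv_mul_cancel₀ hγpos.ne', one_mul] at h2
      linarith
    · nlinarith
  · have hP0 : A.Plus.dist x y = 0 := SimpleGraph.dist_eq_zero_of_not_reachable hreach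
    have hS0 : A.Star.dist (A.proj x) (A.proj y) = 0 := by
      apply SimpleGraph.dist_eq_zero_of_not_reachable
      rintro ⟨Ws⟩
      obtain ⟨Wl, -⟩ := A.plus_walk_of_star hN Ws x y rfl rfl
      exact hreach ⟨Wl⟩
    rw [hP0, hS0]
    constructor
    · simp only [Nat.cast_zero, mul_zero]
      nlinarith [Nat.cast_nonneg (α := ℝ) N]
    · simp only [Nat.cast_zero, mul_zero, zero_add]
      positivity
end
end

section
/- Let X and Y be metric spaces and let f : X → Y be a map such that there exist non-decreasing unbounded functions ρ₁, ρ₂ : ℝ₊ → ℝ₊ with ρ₁(d_X(x, x')) ≤ d_Y(f(x), f(x')) ≤ ρ₂(d_X(x, x')) for all x, x' ∈ X, and suppose moreover that there is a constant C ≥ 0 such that every point of Y is within distance C of the image f(X). Then asdim(X) = asdim(Y). -/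
noncomputable section

lemma asdimLE_transfer {X Y : Type*} [MetricSpace X] [MetricSpace Y] (f : X → Y)
    (ha : ∀ R : ℝ, ∃ S : ℝ, ∀ x x' : X, dist x x' ≤ R → dist (f x) (f x') ≤ S)
    (hb : ∀ S : ℝ, ∃ R : ℝ, ∀ x x' : X, dist (f x) (f x') ≤ S → dist x x' ≤ R)
    (n : ℕ) (h : AsdimLE (fun a b : Y => dist a b) n) :
    AsdimLE (fun a b : X => dist a b) n := by
  intro 𝒱 hcov hbdd hopenV
  obtain ⟨D₀, hD₀⟩ := hbdd
  obtain ⟨S₁₀, hS₁⟩ := ha 1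
  set K : ℝ := max S₁₀ 0 + 1 with hKdef
  have hK1 : (1:ℝ) ≤ K := by nlinarith [le_max_right S₁₀ (0:ℝ)]
  have hSK : S₁₀ < K := by simp [hKdef]; nlinarith [le_max_left S₁₀ (0:ℝ)]
  obtain ⟨SD₀, hSD⟩ := ha (max D₀ 0)
  set L : ℝ := max SD₀ 0 + K + 1 with hLdef
  have hKL : K + 1 ≤ L := by nlinarith [le_max_right SD₀ (0:ℝ)]
  -- the cover of Y by balls of radius L+1
  set 𝒱Y : Set (Set Y) := Set.range (fun y : Y => Metric.ball y (L + 1)) with h𝒱Y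
  have hLpos : (0:ℝ) < L + 1 := by linarith
  have hcovY : IsCover 𝒱Y := fun y => ⟨Metric.ball y (L+1), ⟨y, rfl⟩, Metric.mem_ball_self hLpos⟩
  have hbddY : UnifBdd (fun a b : Y => dist a b) 𝒱Y := by
    refine ⟨2 * (L + 1), ?_⟩
    rintro V ⟨c, rfl⟩ x hx y hy
    have h1 : dist x c < L + 1 := Metric.mem_ball.mp hx
    have h2 : dist y c < L + 1 := Metric.mem_ball.mp hy
    have := dist_triangle x c y
    rw [dist_comm c y] at this
    simp only []
    linarith
  have hopenY : ∀ V ∈ 𝒱Y, DOpen (fun a b : Y => dist a b) V := by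
    rintro V ⟨c, rfl⟩ x hx
    have h1 : dist x c < L + 1 := Metric.mem_ball.mp hx
    refine ⟨L + 1 - dist x c, by linarith, fun y hy => ?_⟩
    have : dist y c ≤ dist y x + dist x c := dist_triangle y x c
    rw [dist_comm y x] at this
    exact Metric.mem_ball.mpr (by simp only [] at hy; linarith)
  obtain ⟨𝒰', hcov', hbdd', hopen', hmult', href'⟩ := h 𝒱Y hcovY hbddY hopenY
  obtain ⟨DY, hDY⟩ := hbdd'
  -- the pulled-back, shrunk-and-fattened sets
  set P : Set Y → Set X :=
    fun U => {x : X | ∃ x₀ : X, dist x x₀ < 1/2 ∧ ∀ z : Y, dist (f x₀) z ≤ K → z ∈ U}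
    with hPdef
  have memPU : ∀ U : Set Y, ∀ x : X, x ∈ P U → f x ∈ U := by
    intro U x ⟨x₀, h1, h2⟩
    refine h2 (f x) ?_
    have : dist x₀ x ≤ 1 := by rw [dist_comm]; linarith
    exact le_trans (hS₁ x₀ x this) (by linarith)
  set 𝒰 : Set (Set X) := insert ∅ (P '' 𝒰') with h𝒰
  refine ⟨𝒰, ?_, ?_, ?_, ?_, ?_⟩
  · -- cover
    intro x
    obtain ⟨U, hU, hBU⟩ := href' (Metric.ball (f x) (L+1)) ⟨f x, rfl⟩
    refine ⟨P U, Set.mem_insert_of_mem _ ⟨U, hU, rfl⟩, x, by simp, fun z hz => ?_⟩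
    refine hBU (Metric.mem_ball.mpr ?_)
    rw [dist_comm]
    linarith
  · -- uniformly bounded
    obtain ⟨R, hR⟩ := hb DY
    refine ⟨R + 1, ?_⟩
    rintro W hW x hx y hy
    rcases hW with rfl | ⟨U, hU, rfl⟩
    · exact absurd hx (Set.notMem_empty x)
    · obtain ⟨x₀, hx₀, hfx₀⟩ := hx
      obtain ⟨y₀, hy₀, hfy₀⟩ := hy
      have hfx₀U : f x₀ ∈ U := hfx₀ (f x₀) (by simp; linarith)
      have hfy₀U : f y₀ ∈ U := hfy₀ (f y₀) (by simp; linarith)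
      have h1 : dist (f x₀) (f y₀) ≤ DY := hDY U hU _ hfx₀U _ hfy₀U
      have h2 : dist x₀ y₀ ≤ R := hR _ _ h1
      have t1 := dist_triangle4 x x₀ y₀ y
      rw [dist_comm y₀ y] at t1
      simp only []
      linarith
  · -- open
    rintro W hW x hx
    rcases hW with rfl | ⟨U, hU, rfl⟩
    · exact absurd hx (Set.notMem_empty x)
    · obtain ⟨x₀, hx₀, hfx₀⟩ := hx
      refine ⟨1/2 - dist x x₀, by linarith, fun y hy => ?_⟩
      refine ⟨x₀, ?_, hfx₀⟩
      have := dist_triangle y x x₀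
      rw [dist_comm y x] at this
      simp only [] at hy
      linarith
  · -- multiplicity
    intro x F hF
    classical
    set u : Set X → Set Y := fun W =>
      if hw : ∃ U, U ∈ 𝒰' ∧ W = P U ∧ f x ∈ U then hw.choose else ∅ with hu
    have key : ∀ W ∈ F, u W ∈ 𝒰' ∧ W = P (u W) ∧ f x ∈ u W := by
      intro W hW
      obtain ⟨hW𝒰, hxW⟩ := hF W hW
      rcases hW𝒰 with rfl | ⟨U, hU, rfl⟩
      · exact absurd hxW (Set.notMem_empty x)
      · have hex : ∃ U', U' ∈ 𝒰' ∧ P U = P U' ∧ f x ∈ U' :=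
          ⟨U, hU, rfl, memPU U x hxW⟩
        simp only [hu, dif_pos hex]
        exact hex.choose_spec
    have hinj : Set.InjOn u ↑F := by
      intro W₁ hW₁ W₂ hW₂ heq
      have k1 := (key W₁ hW₁).2.1
      have k2 := (key W₂ hW₂).2.1
      rw [k1, k2, heq]
    have hcard : (F.image u).card = F.card := Finset.card_image_of_injOn hinj
    have := hmult' (f x) (F.image u) (by
      intro V hV
      obtain ⟨W, hW, rfl⟩ := Finset.mem_image.mp hV
      exact ⟨(key W hW).1, (key W hW).2.2⟩)
    rw [hcard] at this
    exact this
  · -- refines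
    intro V hV
    by_cases hVe : V = ∅
    · exact ⟨∅, Set.mem_insert _ _, by simp [hVe]⟩
    · obtain ⟨x₀, hx₀⟩ := Set.nonempty_iff_ne_empty.mpr hVe
      obtain ⟨U, hU, hBU⟩ := href' (Metric.ball (f x₀) (L+1)) ⟨f x₀, rfl⟩
      refine ⟨P U, Set.mem_insert_of_mem _ ⟨U, hU, rfl⟩, fun x hx => ?_⟩
      refine ⟨x, by simp, fun z hz => ?_⟩
      have hd : dist x x₀ ≤ max D₀ 0 := le_trans (hD₀ V hV x hx x₀ hx₀) (le_max_left _ _)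
      have h1 : dist (f x) (f x₀) ≤ SD₀ := hSD x x₀ hd
      have h2 : dist z (f x₀) ≤ dist z (f x) + dist (f x) (f x₀) := dist_triangle z (f x) (f x₀)
      rw [dist_comm z (f x)] at h2
      refine hBU (Metric.mem_ball.mpr ?_)
      have : SD₀ ≤ max SD₀ 0 := le_max_left _ _
      simp only [hLdef]
      linarith


/-- **Proposition.** The asymptotic dimension is invariant under coarse equivalence: if
`f : X → Y` satisfies `ρ₁(d(x,x')) ≤ d(f x, f x') ≤ ρ₂(d(x,x'))` for non-decreasing unbounded
functions `ρ₁, ρ₂ : ℝ₊ → ℝ₊`, and the image of `f` is coarsely dense in `Y`, then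
`asdim(X) = asdim(Y)`. -/
theorem asdim_eq_of_coarseEquiv {X Y : Type*} [MetricSpace X] [MetricSpace Y] (f : X → Y)
    (ρ₁ ρ₂ : ℝ → ℝ)
    (hρ₁0 : ∀ s : ℝ, 0 ≤ s → 0 ≤ ρ₁ s) (hρ₂0 : ∀ s : ℝ, 0 ≤ s → 0 ≤ ρ₂ s)
    (hρ₁mono : ∀ s t : ℝ, 0 ≤ s → s ≤ t → ρ₁ s ≤ ρ₁ t)
    (hρ₂mono : ∀ s t : ℝ, 0 ≤ s → s ≤ t → ρ₂ s ≤ ρ₂ t)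
    (hρ₁unb : ∀ M : ℝ, ∃ s : ℝ, 0 ≤ s ∧ M ≤ ρ₁ s)
    (hρ₂unb : ∀ M : ℝ, ∃ s : ℝ, 0 ≤ s ∧ M ≤ ρ₂ s)
    (hf : ∀ x x' : X, ρ₁ (dist x x') ≤ dist (f x) (f x') ∧ dist (f x) (f x') ≤ ρ₂ (dist x x'))
    (C : ℝ) (hC : 0 ≤ C) (hdense : ∀ y : Y, ∃ x : X, dist y (f x) ≤ C) :
    asdim (fun x y : X => dist x y) = asdim (fun x y : Y => dist x y) := by
  have hfa : ∀ R : ℝ, ∃ S : ℝ, ∀ x x' : X, dist x x' ≤ R → dist (f x) (f x') ≤ S := by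
    intro R
    refine ⟨ρ₂ (max R 0), fun x x' h => ?_⟩
    exact le_trans (hf x x').2 (hρ₂mono _ _ dist_nonneg (le_trans h (le_max_left _ _)))
  have hfb : ∀ S : ℝ, ∃ R : ℝ, ∀ x x' : X, dist (f x) (f x') ≤ S → dist x x' ≤ R := by
    intro S
    obtain ⟨s, hs0, hsρ⟩ := hρ₁unb (S + 1)
    refine ⟨s, fun x x' h => ?_⟩
    by_contra hlt
    push_neg at hlt
    have h1 : ρ₁ s ≤ ρ₁ (dist x x') := hρ₁mono s (dist x x') hs0 hlt.le
    have h2 := (hf x x').1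
    linarith
  have hg' : ∀ y : Y, ∃ x : X, dist y (f x) ≤ C := hdense
  set g : Y → X := fun y => (hg' y).choose with hgdef
  have hg : ∀ y : Y, dist y (f (g y)) ≤ C := fun y => (hg' y).choose_spec
  have hga : ∀ R : ℝ, ∃ S : ℝ, ∀ y y' : Y, dist y y' ≤ R → dist (g y) (g y') ≤ S := by
    intro R
    obtain ⟨R₂, hR₂⟩ := hfb (R + 2 * C)
    refine ⟨R₂, fun y y' h => hR₂ _ _ ?_⟩
    have t := dist_triangle4 (f (g y)) y y' (f (g y'))
    have h1 := hg y
    have h2 := hg y'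
    rw [dist_comm (f (g y)) y] at t
    linarith
  have hgb : ∀ S : ℝ, ∃ R : ℝ, ∀ y y' : Y, dist (g y) (g y') ≤ S → dist y y' ≤ R := by
    intro S
    obtain ⟨S', hS'⟩ := hfa S
    refine ⟨S' + 2 * C, fun y y' h => ?_⟩
    have t := dist_triangle4 y (f (g y)) (f (g y')) y'
    have h1 := hg y
    have h2 := hg y'
    have h3 := hS' _ _ h
    rw [dist_comm (f (g y')) y'] at t
    linarith
  have hiff : ∀ m : ℕ, AsdimLE (fun x y : X => dist x y) m ↔ AsdimLE (fun x y : Y => dist x y) m :=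
    fun m => ⟨asdimLE_transfer g hga hgb m, asdimLE_transfer f hfa hfb m⟩
  unfold asdim
  congr 1
  ext k
  simp only [Set.mem_setOf_eq]
  constructor
  · rintro ⟨m, rfl, hm⟩; exact ⟨m, rfl, (hiff m).mp hm⟩
  · rintro ⟨m, rfl, hm⟩; exact ⟨m, rfl, (hiff m).mpr hm⟩
end
end

section
/- Let X and Y be metric spaces and let f : X → Y be a quasi-isometry, i.e. there are constants γ ≥ 1 and c ≥ 0 such that γ⁻¹·d_X(x, y) − c ≤ d_Y(f(x), f(y)) ≤ γ·d_X(x, y) + c for all x, y ∈ X, and suppose there is a constant C ≥ 0 such that every point of Y is within distance C of the image f(X). Then asdim(X) = asdim(Y). -/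
noncomputable section

lemma asdimLE_transfer_s7 {X Y : Type*} [MetricSpace X] [MetricSpace Y] (f : X → Y)
    (γ : ℝ) (hγ : 1 ≤ γ) (c : ℝ) (hc : 0 ≤ c)
    (hl : ∀ x y : X, γ⁻¹ * dist x y - c ≤ dist (f x) (f y))
    (hu : ∀ x y : X, dist (f x) (f y) ≤ γ * dist x y + c)
    (n : ℕ) (h : AsdimLE (fun x y : Y => dist x y) n) :
    AsdimLE (fun x y : X => dist x y) n := by
  have hγ0 : (0:ℝ) < γ := lt_of_lt_of_le one_pos hγ
  intro 𝒱 hVcov hVbdd hVopen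
  obtain ⟨D0, hD0⟩ := hVbdd
  set D := max D0 0 with hDdef
  have hDnn : 0 ≤ D := le_max_right _ _
  have hDbd : ∀ V ∈ 𝒱, ∀ x ∈ V, ∀ y ∈ V, dist x y ≤ D := fun V hV x hx y hy =>
    (hD0 V hV x hx y hy).trans (le_max_left _ _)
  set L := γ * (D + 1) + c + 1 with hLdef
  have hL1 : γ * (D + 1) + c < L := by rw [hLdef]; linarith
  have hLpos : 0 < L := by
    have : 0 ≤ γ * (D + 1) := by positivity
    rw [hLdef]; linarith
  -- the cover of Y by balls of radius L
  set 𝒱' : Set (Set Y) := Set.range (fun y : Y => Metric.ball y L) with h𝒱'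
  have h𝒱'cov : IsCover 𝒱' := fun y =>
    ⟨Metric.ball y L, ⟨y, rfl⟩, Metric.mem_ball_self hLpos⟩
  have h𝒱'bdd : UnifBdd (fun a b : Y => dist a b) 𝒱' := by
    refine ⟨2 * L, ?_⟩
    rintro V ⟨y, rfl⟩ a ha b hb
    have ha' : dist a y < L := Metric.mem_ball.mp ha
    have hb' : dist b y < L := Metric.mem_ball.mp hb
    have := dist_triangle a y b
    rw [dist_comm b y] at hb'
    linarith
  have h𝒱'open : ∀ V ∈ 𝒱', DOpen (fun a b : Y => dist a b) V := by
    rintro V ⟨y, rfl⟩ a ha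
    refine ⟨L - dist a y, by simpa using Metric.mem_ball.mp ha, fun b hb => ?_⟩
    have := dist_triangle b a y
    rw [dist_comm b a] at this
    exact Metric.mem_ball.mpr (by linarith)
  obtain ⟨𝒰', h𝒰'cov, ⟨E0, hE0⟩, h𝒰'open, h𝒰'mult, h𝒰'ref⟩ := h 𝒱' h𝒱'cov h𝒱'bdd h𝒱'open
  set E := max E0 0 with hEdef
  have hEnn : 0 ≤ E := le_max_right _ _
  have hEbd : ∀ U ∈ 𝒰', ∀ x ∈ U, ∀ y ∈ U, dist x y ≤ E := fun U hU x hx y hy =>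
    (hE0 U hU x hx y hy).trans (le_max_left _ _)
  -- the pullback cover
  set W : Set Y → Set X :=
    fun U' => {x : X | ∃ δ > (0:ℝ), ∀ x', dist x x' < δ → f x' ∈ U'} with hWdef
  set 𝒰 : Set (Set X) := insert ∅ (W '' 𝒰') with h𝒰def
  have hWsub : ∀ U' : Set Y, ∀ x ∈ W U', f x ∈ U' := by
    rintro U' x ⟨δ, hδ, hx⟩
    exact hx x (by simpa using hδ)
  have hmemW : ∀ (x : X) (U' : Set Y), Metric.ball (f x) L ⊆ U' → x ∈ W U' := by
    intro x U' hsub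
    refine ⟨1, one_pos, fun x' hx' => ?_⟩
    apply hsub
    rw [Metric.mem_ball, dist_comm]
    calc dist (f x) (f x') ≤ γ * dist x x' + c := hu x x'
      _ < γ * 1 + c := by
          have := (mul_lt_mul_iff_right₀ hγ0).mpr hx'
          linarith
      _ ≤ γ * (D + 1) + c := by nlinarith
      _ < L := hL1
  refine ⟨𝒰, ?_, ?_, ?_, ?_, ?_⟩
  · -- cover
    intro x
    obtain ⟨U', hU', hsub⟩ := h𝒰'ref (Metric.ball (f x) L) ⟨f x, rfl⟩
    exact ⟨W U', Set.mem_insert_of_mem _ ⟨U', hU', rfl⟩, hmemW x U' hsub⟩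
  · -- uniformly bounded
    refine ⟨γ * (E + c), ?_⟩
    rintro U hU x hx y hy
    rcases hU with rfl | ⟨U', hU', rfl⟩
    · exact absurd hx (Set.notMem_empty x)
    · have h1 : dist (f x) (f y) ≤ E := hEbd U' hU' _ (hWsub U' x hx) _ (hWsub U' y hy)
      have h2 : γ⁻¹ * dist x y - c ≤ E := (hl x y).trans h1
      have h3 : γ⁻¹ * dist x y ≤ E + c := by linarith
      have h4 : γ * (γ⁻¹ * dist x y) ≤ γ * (E + c) :=
        mul_le_mul_of_nonneg_left h3 hγ0.le
      rwa [← mul_assoc, mul_inv_cancel₀ (ne_of_gt hγ0), one_mul] at h4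
  · -- open
    rintro U hU x hx
    rcases hU with rfl | ⟨U', hU', rfl⟩
    · exact absurd hx (Set.notMem_empty x)
    · obtain ⟨δ, hδ, hball⟩ := hx
      refine ⟨δ / 2, by linarith, fun y hy => ⟨δ / 2, by linarith, fun x' hx' => ?_⟩⟩
      apply hball
      calc dist x x' ≤ dist x y + dist y x' := dist_triangle x y x'
        _ < δ / 2 + δ / 2 := by exact add_lt_add hy hx'
        _ = δ := by ring
  · -- multiplicity
    intro x F hF
    classical
    set φ : Set X → Set Y := fun V =>
      if hv : ∃ U' ∈ 𝒰', W U' = V then hv.choose else ∅ with hφdef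
    have hφ : ∀ V ∈ F, φ V ∈ 𝒰' ∧ W (φ V) = V := by
      intro V hV
      obtain ⟨hV𝒰, hxV⟩ := hF V hV
      have hv : ∃ U' ∈ 𝒰', W U' = V := by
        rcases hV𝒰 with rfl | ⟨U', hU', rfl⟩
        · exact absurd hxV (Set.notMem_empty x)
        · exact ⟨U', hU', rfl⟩
      simp only [hφdef, dif_pos hv]
      exact ⟨hv.choose_spec.1, hv.choose_spec.2⟩
    have hinj : Set.InjOn φ ↑F := by
      intro V1 h1 V2 h2 heq
      have e1 := (hφ V1 h1).2
      have e2 := (hφ V2 h2).2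
      rw [← e1, ← e2, heq]
    have hcard : (F.image φ).card = F.card := Finset.card_image_of_injOn hinj
    rw [← hcard]
    apply h𝒰'mult (f x)
    intro U' hU'
    obtain ⟨V, hV, rfl⟩ := Finset.mem_image.mp hU'
    refine ⟨(hφ V hV).1, ?_⟩
    have hxV : x ∈ V := (hF V hV).2
    have := hWsub (φ V) x (by rw [(hφ V hV).2]; exact hxV)
    exact this
  · -- refines
    intro V hV
    rcases Set.eq_empty_or_nonempty V with rfl | ⟨x₀, hx₀⟩
    · exact ⟨∅, Set.mem_insert _ _, Set.empty_subset _⟩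
    · obtain ⟨U', hU', hsub⟩ := h𝒰'ref (Metric.ball (f x₀) L) ⟨f x₀, rfl⟩
      refine ⟨W U', Set.mem_insert_of_mem _ ⟨U', hU', rfl⟩, fun x hx => ?_⟩
      refine ⟨1, one_pos, fun x' hx' => ?_⟩
      apply hsub
      rw [Metric.mem_ball, dist_comm]
      have hxx₀ : dist x₀ x ≤ D := hDbd V hV x₀ hx₀ x hx
      calc dist (f x₀) (f x') ≤ γ * dist x₀ x' + c := hu x₀ x'
        _ ≤ γ * (dist x₀ x + dist x x') + c := by
            have := dist_triangle x₀ x x'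
            nlinarith
        _ < γ * (D + 1) + c := by nlinarith
        _ < L := hL1

/-- **Proposition.** The asymptotic dimension is a quasi-isometry invariant: if `f : X → Y`
is a quasi-isometry (with constants `γ ≥ 1`, `c ≥ 0`) whose image is coarsely dense in `Y`,
then `asdim(X) = asdim(Y)`. -/
theorem asdim_eq_of_quasiIsometry {X Y : Type*} [MetricSpace X] [MetricSpace Y] (f : X → Y)
    (γ : ℝ) (hγ : 1 ≤ γ) (c : ℝ) (hc : 0 ≤ c)
    (hf : ∀ x y : X,
      γ⁻¹ * dist x y - c ≤ dist (f x) (f y) ∧ dist (f x) (f y) ≤ γ * dist x y + c)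
    (C : ℝ) (hC : 0 ≤ C) (hdense : ∀ y : Y, ∃ x : X, dist y (f x) ≤ C) :
    asdim (fun x y : X => dist x y) = asdim (fun x y : Y => dist x y) := by
  have hγ0 : (0:ℝ) < γ := lt_of_lt_of_le one_pos hγ
  have hinv : γ * γ⁻¹ = 1 := mul_inv_cancel₀ (ne_of_gt hγ0)
  have hinv1 : γ⁻¹ ≤ 1 := by
    rw [inv_le_one_iff₀]; right; exact hγ
  -- the quasi-inverse
  set g : Y → X := fun y => (hdense y).choose with hgdef
  have hg : ∀ y : Y, dist y (f (g y)) ≤ C := fun y => (hdense y).choose_spec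
  set c' : ℝ := γ * (2 * C + c) with hc'def
  have hc' : 0 ≤ c' := by positivity
  have hgu : ∀ y y' : Y, dist (g y) (g y') ≤ γ * dist y y' + c' := by
    intro y y'
    have h1 : γ⁻¹ * dist (g y) (g y') - c ≤ dist (f (g y)) (f (g y')) := (hf _ _).1
    have h2 : dist (f (g y)) (f (g y')) ≤ dist y y' + 2 * C := by
      have t1 := dist_triangle (f (g y)) y (f (g y'))
      have t2 := dist_triangle y y' (f (g y'))
      have := hg y
      have := hg y'
      rw [dist_comm (f (g y)) y] at t1
      linarith
    have h3 : γ⁻¹ * dist (g y) (g y') ≤ dist y y' + 2 * C + c := by linarith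
    have h4 := mul_le_mul_of_nonneg_left h3 hγ0.le
    rw [← mul_assoc, hinv, one_mul] at h4
    rw [hc'def]; linarith
  have hgl : ∀ y y' : Y, γ⁻¹ * dist y y' - c' ≤ dist (g y) (g y') := by
    intro y y'
    have h1 : dist (f (g y)) (f (g y')) ≤ γ * dist (g y) (g y') + c := (hf _ _).2
    have h2 : dist y y' ≤ dist (f (g y)) (f (g y')) + 2 * C := by
      have t1 := dist_triangle y (f (g y)) y'
      have t2 := dist_triangle (f (g y)) (f (g y')) y'
      have := hg y
      have := hg y'
      rw [dist_comm (f (g y')) y'] at t2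
      linarith
    have h3 : dist y y' ≤ γ * dist (g y) (g y') + (2 * C + c) := by linarith
    have h4 := mul_le_mul_of_nonneg_left h3 (inv_nonneg.mpr hγ0.le)
    rw [mul_add, ← mul_assoc, inv_mul_cancel₀ (ne_of_gt hγ0), one_mul] at h4
    have h5 : γ⁻¹ * (2 * C + c) ≤ γ * (2 * C + c) := by nlinarith
    rw [hc'def]
    linarith
  have key : ∀ m : ℕ,
      AsdimLE (fun x y : X => dist x y) m ↔ AsdimLE (fun x y : Y => dist x y) m := by
    intro m
    constructor
    · intro h
      exact asdimLE_transfer_s7 g γ hγ c' hc' hgl hgu m h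
    · intro h
      exact asdimLE_transfer_s7 f γ hγ c hc (fun x y => (hf x y).1) (fun x y => (hf x y).2) m h
  unfold asdim
  congr 1
  ext k
  simp only [Set.mem_setOf_eq]
  constructor
  · rintro ⟨m, rfl, hm⟩
    exact ⟨m, rfl, (key m).mp hm⟩
  · rintro ⟨m, rfl, hm⟩
    exact ⟨m, rfl, (key m).mpr hm⟩
end
end

section
/- (Infinite Union Theorem) Let X be a metric space, n ∈ ℕ, and X = ⋃_{i∈I} X_i for a family (X_i)_{i∈I} of subsets of X (each with the induced metric) satisfying asdim(X_i) ≤ n uniformly. Suppose that for every r > 0 there exists a subset Y_r ⊆ X with asdim(Y_r) ≤ n such that d(X_i ∖ Y_r, X_j ∖ Y_r) ≥ r for all i ≠ j with X_i ≠ X_j. Then asdim(X) ≤ n. -/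
noncomputable section

/-- A family `𝒮` of subsets of `X` satisfies `asdim ≤ n` *uniformly*: for every `r > 0` there
is `R ∈ ℕ` such that every `s ∈ 𝒮` admits `r`-disjoint families `𝒱₀, …, 𝒱ₙ` of `R`-bounded
subsets of `s` whose union covers `s`. -/
def UnifAsdimLE {X : Type*} (d : X → X → ℝ) (𝒮 : Set (Set X)) (n : ℕ) : Prop :=
  ∀ r > (0 : ℝ), ∃ R : ℕ, ∀ s ∈ 𝒮, ∃ 𝒱 : Fin (n + 1) → Set (Set X),
    (∀ j, ∀ V ∈ 𝒱 j, V ⊆ s ∧ ∀ x ∈ V, ∀ y ∈ V, d x y ≤ (R : ℝ)) ∧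
    (∀ j, RDisjoint d r (𝒱 j)) ∧
    (∀ x ∈ s, ∃ j, ∃ V ∈ 𝒱 j, x ∈ V)

lemma asdimLE_mono {X : Type*} {d : X → X → ℝ} {m n : ℕ} (h : AsdimLE d m) (hmn : m ≤ n) :
    AsdimLE d n := by
  intro 𝒱 hc hb ho
  obtain ⟨𝒰, h1, h2, h3, h4, h5⟩ := h 𝒱 hc hb ho
  exact ⟨𝒰, h1, h2, h3, fun x F hF => (h4 x F hF).trans (by omega), h5⟩

lemma asdimLE_of_asdim_le {X : Type*} {d : X → X → ℝ} {n : ℕ}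
    (h : asdim d ≤ (n : ℕ∞)) : AsdimLE d n := by
  by_contra hcon
  have hlb : ∀ k ∈ {k : ℕ∞ | ∃ m : ℕ, k = (m : ℕ∞) ∧ AsdimLE d m}, ((n : ℕ∞) + 1) ≤ k := by
    rintro k ⟨m, rfl, hm⟩
    by_contra hk
    push_neg at hk
    have hmn : m ≤ n := by
      have : ((m : ℕ∞)) < ((n + 1 : ℕ) : ℕ∞) := by push_cast; exact_mod_cast hk
      exact_mod_cast Nat.lt_succ_iff.mp (by exact_mod_cast this)
    exact hcon (asdimLE_mono hm hmn)
  have h2 : ((n : ℕ∞) + 1) ≤ (n : ℕ∞) := le_trans (le_sInf hlb) h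
  have h3 : ((n : ℕ∞)) < (n : ℕ∞) + 1 := by
    have : ((n : ℕ∞)) < ((n + 1 : ℕ) : ℕ∞) := by exact_mod_cast Nat.lt_succ_self n
    simpa [Nat.cast_add] using this
  exact absurd h2 (not_le.mpr h3)

open Metric Set

lemma exists_disjoint_families {Z : Type*} [MetricSpace Z] {n : ℕ}
    (h : AsdimLE (fun a b : Z => dist a b) n) :
    ∀ r > (0:ℝ), ∃ (𝒲 : Fin (n+1) → Set (Set Z)) (M : ℝ),
      (∀ j, RDisjoint (fun a b : Z => dist a b) r (𝒲 j)) ∧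
      (∀ j, ∀ W ∈ 𝒲 j, ∀ x ∈ W, ∀ y ∈ W, dist x y ≤ M) ∧
      (∀ z : Z, ∃ j, ∃ W ∈ 𝒲 j, z ∈ W) := by
  intro r hr
  set L : ℝ := (n + 2) * r with hLdef
  have hL : 0 < L := by positivity
  obtain ⟨𝒰, hUc, ⟨B, hB⟩, hUo, hUm, hUr⟩ :=
    h {V | ∃ z : Z, V = Metric.ball z L}
      (fun z => ⟨Metric.ball z L, ⟨z, rfl⟩, by simpa [Metric.mem_ball] using hL⟩)
      ⟨2 * L, by
        rintro V ⟨z, rfl⟩ x hx y hy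
        have hx' : dist x z < L := Metric.mem_ball.mp hx
        have hy' : dist y z < L := Metric.mem_ball.mp hy
        calc dist x y ≤ dist x z + dist z y := dist_triangle _ _ _
          _ ≤ 2 * L := by rw [dist_comm z y]; linarith⟩
      (by
        rintro V ⟨z, rfl⟩ x hx
        refine ⟨L - dist x z, by simpa [Metric.mem_ball] using hx, fun y hy => ?_⟩
        have h1 : dist y z ≤ dist y x + dist x z := dist_triangle _ _ _
        have h2 : dist x y < L - dist x z := hy
        rw [dist_comm y x] at h1
        exact Metric.mem_ball.mpr (by linarith))
  by_cases huniv : Set.univ ∈ 𝒰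
  · refine ⟨fun j => if j = 0 then {Set.univ} else ∅, B, ?_, ?_, ?_⟩
    · intro j V hV W hW hVW
      by_cases hj : j = 0
      · simp [hj] at hV hW; exact absurd (hV.trans hW.symm) hVW
      · simp [hj] at hV
    · intro j W hW x hx y hy
      by_cases hj : j = 0
      · simp [hj] at hW; subst hW; exact hB _ huniv x trivial y trivial
      · simp [hj] at hW
    · intro z; exact ⟨0, Set.univ, by simp, trivial⟩
  -- main case
  have hcompl : ∀ U ∈ 𝒰, Uᶜ.Nonempty := fun U hU =>
    Set.nonempty_compl.mpr (fun he => huniv (he ▸ hU))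
  set S : ℕ → Z → Set (Set Z) := fun k z => {U | U ∈ 𝒰 ∧ (k : ℝ) * r < Metric.infDist z Uᶜ}
    with hSdef
  have hmem : ∀ k z U, U ∈ S k z → z ∈ U := by
    intro k z U hU
    by_contra hz
    have h0 : Metric.infDist z Uᶜ = 0 := Metric.infDist_zero_of_mem hz
    have : (0:ℝ) ≤ (k:ℝ) * r := by positivity
    have := hU.2
    rw [h0] at this; linarith
  have hanti : ∀ k l : ℕ, k ≤ l → ∀ z, S l z ⊆ S k z := by
    intro k l hkl z U hU
    refine ⟨hU.1, lt_of_le_of_lt ?_ hU.2⟩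
    have : (k:ℝ) ≤ (l:ℝ) := by exact_mod_cast hkl
    nlinarith
  have hfin : ∀ z, (S 0 z).Finite := by
    intro z
    by_contra hinf
    obtain ⟨F, hFs, hFcard⟩ := Set.Infinite.exists_subset_card_eq hinf (n + 2)
    have := hUm z F (fun V hV => ⟨(hFs hV).1, hmem 0 z V (hFs hV)⟩)
    omega
  have hcard : ∀ z, (S 0 z).ncard ≤ n + 1 := by
    intro z
    have hF := hfin z
    rw [Set.ncard_eq_toFinset_card _ hF]
    exact hUm z hF.toFinset (fun V hV => by
      have hV' := hF.mem_toFinset.mp hV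
      exact ⟨hV'.1, hmem 0 z V hV'⟩)
  have hne : ∀ z : Z, ∃ U, U ∈ S (n+1) z := by
    intro z
    obtain ⟨U, hU, hsub⟩ := hUr (Metric.ball z L) ⟨z, rfl⟩
    refine ⟨U, hU, ?_⟩
    have hUcne := hcompl U hU
    have hge : L ≤ Metric.infDist z Uᶜ := by
      by_contra hlt
      push_neg at hlt
      obtain ⟨y, hy, hdy⟩ := (Metric.infDist_lt_iff hUcne).mp hlt
      exact hy (hsub (Metric.mem_ball'.mpr hdy))
    have : ((n:ℝ)+1) * r < L := by rw [hLdef]; nlinarith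
    push_cast
    linarith
  have hstep : ∀ z : Z, ∃ k ≤ n, S k z = S (k+1) z := by
    intro z
    by_contra hcon
    push_neg at hcon
    have key : ∀ k, k ≤ n + 1 → (S k z).ncard + k ≤ (S 0 z).ncard := by
      intro k
      induction k with
      | zero => simp
      | succ k ih =>
        intro hk
        have h1 := ih (by omega)
        have hss : S (k+1) z ⊂ S k z :=
          (ssubset_iff_of_subset (hanti k (k+1) (by omega) z)).mpr
            (by
              by_contra hall
              push_neg at hall
              exact hcon k (by omega) (Set.Subset.antisymm (fun U hU => hall U hU) (hanti k (k+1) (by omega) z)))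
        have hlt : (S (k+1) z).ncard < (S k z).ncard :=
          Set.ncard_lt_ncard hss ((hfin z).subset (hanti 0 k (Nat.zero_le _) z))
        omega
    have hpos : 0 < (S (n+1) z).ncard := by
      obtain ⟨U, hU⟩ := hne z
      exact Set.ncard_pos ((hfin z).subset (hanti 0 (n+1) (Nat.zero_le _) z)) |>.mpr ⟨U, hU⟩
    have := key (n+1) le_rfl
    have := hcard z
    omega
  -- the colored families
  refine ⟨fun j => {W | ∃ T : Set (Set Z), T.Nonempty ∧
      W = {z | S (j : ℕ) z = T ∧ S ((j : ℕ)+1) z = T}}, B, ?_, ?_, ?_⟩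
  · -- r-disjoint
    rintro j V ⟨T, hTne, rfl⟩ W ⟨T', hT'ne, rfl⟩ hVW x hx y hy
    have hTT' : T ≠ T' := fun he => hVW (by rw [he])
    have main : ∀ (a b : Z) (Ta Tb : Set (Set Z)), S ((j:ℕ)+1) a = Ta → S (j:ℕ) b = Tb →
        ∀ U, U ∈ Ta → U ∉ Tb → r ≤ dist a b := by
      intro a b Ta Tb ha hb U hUa hUb
      have hUa' : U ∈ S ((j:ℕ)+1) a := ha ▸ hUa
      have hUb' : U ∉ S (j:ℕ) b := hb ▸ hUb
      have h1 : (((j:ℕ)+1 : ℕ) : ℝ) * r < Metric.infDist a Uᶜ := hUa'.2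
      have h2 : Metric.infDist b Uᶜ ≤ ((j:ℕ) : ℝ) * r := by
        by_contra hgt
        push_neg at hgt
        exact hUb' ⟨hUa'.1, hgt⟩
      have h3 : Metric.infDist a Uᶜ ≤ Metric.infDist b Uᶜ + dist a b :=
        Metric.infDist_le_infDist_add_dist
      push_cast at h1
      linarith
    by_cases hsub : T ⊆ T'
    · have : ¬ T' ⊆ T := fun h' => hTT' (Set.Subset.antisymm hsub h')
      obtain ⟨U, hUT', hUT⟩ := Set.not_subset.mp this
      have := main y x T' T hy.2 hx.1 U hUT' hUT
      rw [dist_comm] at this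
      exact this
    · obtain ⟨U, hUT, hUT'⟩ := Set.not_subset.mp hsub
      exact main x y T T' hx.2 hy.1 U hUT hUT'
  · -- bounded
    rintro j W ⟨T, ⟨U, hU⟩, rfl⟩ x hx y hy
    have hUx : U ∈ S (j:ℕ) x := hx.1 ▸ hU
    have hUy : U ∈ S (j:ℕ) y := hy.1 ▸ hU
    exact hB U hUx.1 x (hmem _ _ _ hUx) y (hmem _ _ _ hUy)
  · -- cover
    intro z
    obtain ⟨k, hk, heq⟩ := hstep z
    refine ⟨⟨k, by omega⟩, {z' | S k z' = S k z ∧ S (k+1) z' = S k z}, ⟨S k z, ?_, rfl⟩, rfl, heq.symm⟩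
    obtain ⟨U, hU⟩ := hne z
    exact ⟨U, hanti k (n+1) (by omega) z hU⟩

lemma asdimLE_of_families {Z : Type*} [MetricSpace Z] {n : ℕ}
    (h : ∀ r > (0:ℝ), ∃ (𝒲 : Fin (n+1) → Set (Set Z)) (M : ℝ),
      (∀ j, RDisjoint (fun a b : Z => dist a b) r (𝒲 j)) ∧
      (∀ j, ∀ W ∈ 𝒲 j, ∀ x ∈ W, ∀ y ∈ W, dist x y ≤ M) ∧
      (∀ z : Z, ∃ j, ∃ W ∈ 𝒲 j, z ∈ W)) :
    AsdimLE (fun a b : Z => dist a b) n := by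
  cases isEmpty_or_nonempty Z with
  | inl hemp =>
    intro 𝒱 hc hb ho
    refine ⟨{∅}, fun x => (hemp.false x).elim, ⟨0, ?_⟩, ?_, fun x => (hemp.false x).elim, ?_⟩
    · rintro V rfl x hx; exact absurd hx (Set.notMem_empty x)
    · rintro U rfl x hx; exact absurd hx (Set.notMem_empty x)
    · intro V _; exact ⟨∅, rfl, fun x hx => (hemp.false x).elim⟩
  | inr hne =>
    intro 𝒱 hc hb ho
    obtain ⟨D, hD⟩ := hb
    set ε : ℝ := |D| + 1 with hεdef
    have hε : 0 < ε := by positivity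
    obtain ⟨𝒲, M, hdisj, hbd, hcov⟩ := h (2*ε + 1) (by positivity)
    set 𝒰 : Set (Set Z) := {U | ∃ j, ∃ W ∈ 𝒲 j, U = {x | ∃ w ∈ W, dist x w < ε}} with h𝒰
    have hcovU : IsCover 𝒰 := by
      intro z
      obtain ⟨j, W, hW, hz⟩ := hcov z
      exact ⟨{x | ∃ w ∈ W, dist x w < ε}, ⟨j, W, hW, rfl⟩, ⟨z, hz, by simp [hε]⟩⟩
    refine ⟨𝒰, hcovU, ⟨M + 2*ε, ?_⟩, ?_, ?_, ?_⟩
    · rintro U ⟨j, W, hW, rfl⟩ x ⟨w, hw, hxw⟩ y ⟨w', hw', hyw'⟩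
      have h1 : dist x y ≤ dist x w + dist w w' + dist w' y := dist_triangle4 _ _ _ _
      have h2 : dist w w' ≤ M := hbd j W hW w hw w' hw'
      rw [dist_comm w' y] at h1
      simp only []
      linarith
    · rintro U ⟨j, W, hW, rfl⟩ x ⟨w, hw, hxw⟩
      refine ⟨ε - dist x w, by linarith, fun y hy => ?_⟩
      have hy' : dist x y < ε - dist x w := hy
      have : dist y w ≤ dist y x + dist x w := dist_triangle _ _ _
      rw [dist_comm y x] at this
      exact ⟨w, hw, by linarith⟩
    · -- multiplicity
      intro x F hF
      classical
      set f : Set Z → Fin (n+1) := fun U =>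
        if hU : ∃ j, ∃ W ∈ 𝒲 j, U = {x | ∃ w ∈ W, dist x w < ε} then hU.choose else 0 with hf
      have hspec : ∀ U ∈ F, ∃ W ∈ 𝒲 (f U), U = {x | ∃ w ∈ W, dist x w < ε} := by
        intro U hU
        have h1 : ∃ j, ∃ W ∈ 𝒲 j, U = {x | ∃ w ∈ W, dist x w < ε} := (hF U hU).1
        simp only [hf, dif_pos h1]
        exact h1.choose_spec
      have hinj : Set.InjOn f ↑F := by
        intro U hU U' hU' hff
        obtain ⟨W, hW, rfl⟩ := hspec U hU
        obtain ⟨W', hW', rfl⟩ := hspec U' hU'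
        by_contra hne'
        have hWW' : W ≠ W' := fun he => hne' (by rw [he])
        obtain ⟨w, hw, hxw⟩ := (hF _ hU).2
        obtain ⟨w', hw', hxw'⟩ := (hF _ hU').2
        have := hdisj (f {x | ∃ w ∈ W, dist x w < ε}) W hW W' (hff ▸ hW') hWW' w hw w' hw'
        have h4 : dist w w' ≤ dist w x + dist x w' := dist_triangle _ _ _
        rw [dist_comm w x] at h4
        simp only [] at this
        linarith
      calc F.card ≤ (Finset.univ : Finset (Fin (n+1))).card :=
            Finset.card_le_card_of_injOn f (fun _ _ => Finset.mem_univ _) hinj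
        _ = n + 1 := by simp
    · -- refines
      intro V hV
      rcases Set.eq_empty_or_nonempty V with rfl | ⟨x, hx⟩
      · obtain ⟨U, hU, _⟩ := hcovU (Classical.arbitrary Z)
        exact ⟨U, hU, Set.empty_subset U⟩
      · obtain ⟨j, W, hW, hxW⟩ := hcov x
        refine ⟨{x' | ∃ w ∈ W, dist x' w < ε}, ⟨j, W, hW, rfl⟩, fun y hy => ?_⟩
        refine ⟨x, hxW, ?_⟩
        have := hD V hV y hy x hx
        have hDabs : D ≤ |D| := le_abs_self D
        simp only [] at this
        linarith

/-- **Infinite Union Theorem.** Let `X = ⋃ᵢ Xᵢ` with `asdim(Xᵢ) ≤ n` uniformly, and suppose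
that for every `r > 0` there is `Yᵣ ⊆ X` with `asdim(Yᵣ) ≤ n` such that
`d(Xᵢ ∖ Yᵣ, Xⱼ ∖ Yᵣ) ≥ r` whenever `Xᵢ ≠ Xⱼ`. Then `asdim(X) ≤ n`. -/
theorem asdim_le_of_infinite_union {X : Type*} [MetricSpace X] (n : ℕ)
    {ι : Type*} (Xi : ι → Set X)
    (hcover : (⋃ i, Xi i) = Set.univ)
    (hunif : UnifAsdimLE (fun x y : X => dist x y) (Set.range Xi) n)
    (hY : ∀ r > (0 : ℝ), ∃ Y : Set X,
      asdim (fun a b : Y => dist (a : X) (b : X)) ≤ (n : ℕ∞) ∧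
      ∀ i j : ι, Xi i ≠ Xi j →
        ∀ x ∈ Xi i \ Y, ∀ y ∈ Xi j \ Y, r ≤ dist x y) :
    asdim (fun x y : X => dist x y) ≤ (n : ℕ∞) := by
  classical
  have main : AsdimLE (fun x y : X => dist x y) n := by
    apply asdimLE_of_families
    intro r hr
    obtain ⟨R, hR⟩ := hunif r hr
    obtain ⟨Y, hYdim, hYsep⟩ := hY r hr
    choose! 𝒱 h𝒱sub h𝒱disj h𝒱cov using hR
    have hd : (fun a b : Y => dist (a : X) (b : X)) = (fun a b : Y => dist a b) :=
      funext fun a => funext fun b => (Subtype.dist_eq a b).symm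
    have hYle : AsdimLE (fun a b : Y => dist a b) n := asdimLE_of_asdim_le (hd ▸ hYdim)
    have hR0 : (0:ℝ) ≤ (R:ℝ) := Nat.cast_nonneg R
    set ℓ : ℝ := 3*r + 2*(R:ℝ) with hℓdef
    have hℓ : 0 < ℓ := by positivity
    obtain ⟨𝒲Y, MY, hWdisj, hWbd, hWcov⟩ := exists_disjoint_families hYle ℓ hℓ
    -- push the Y-families down to X
    set 𝒲X : Fin (n+1) → Set (Set X) :=
      fun j => (fun (W : Set Y) => (Subtype.val '' W)) '' (𝒲Y j) with h𝒲X
    have hX1 : ∀ j, ∀ V ∈ 𝒲X j, ∀ W ∈ 𝒲X j, V ≠ W → ∀ x ∈ V, ∀ y ∈ W, ℓ ≤ dist x y := by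
      rintro j V ⟨V0, hV0, rfl⟩ W ⟨W0, hW0, rfl⟩ hVW x hx y hy
      obtain ⟨a, ha, rfl⟩ := hx
      obtain ⟨b, hb, rfl⟩ := hy
      have hV0W0 : V0 ≠ W0 := fun he => hVW (by rw [he])
      have := hWdisj j V0 hV0 W0 hW0 hV0W0 a ha b hb
      simpa [Subtype.dist_eq] using this
    have hX2 : ∀ j, ∀ W ∈ 𝒲X j, ∀ x ∈ W, ∀ y ∈ W, dist x y ≤ MY := by
      rintro j W ⟨W0, hW0, rfl⟩ x hx y hy
      obtain ⟨a, ha, rfl⟩ := hx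
      obtain ⟨b, hb, rfl⟩ := hy
      have := hWbd j W0 hW0 a ha b hb
      simpa [Subtype.dist_eq] using this
    have hX3 : ∀ x ∈ Y, ∃ j, ∃ W ∈ 𝒲X j, x ∈ W := by
      intro x hx
      obtain ⟨j, W0, hW0, hmem⟩ := hWcov ⟨x, hx⟩
      exact ⟨j, Subtype.val '' W0, ⟨W0, hW0, rfl⟩, ⟨⟨x, hx⟩, hmem, rfl⟩⟩
    -- the families coming from the Xi off Y
    set 𝒜 : Fin (n+1) → Set (Set X) :=
      fun j => {A | ∃ i : ι, ∃ V ∈ 𝒱 (Xi i) j, A = V \ Y} with h𝒜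
    have h𝒜bd : ∀ j, ∀ A ∈ 𝒜 j, ∀ x ∈ A, ∀ y ∈ A, dist x y ≤ (R:ℝ) := by
      rintro j A ⟨i, V, hV, rfl⟩ x hx y hy
      exact (h𝒱sub (Xi i) ⟨i, rfl⟩ j V hV).2 x hx.1 y hy.1
    have h𝒜disj : ∀ j, ∀ A ∈ 𝒜 j, ∀ A' ∈ 𝒜 j, A ≠ A' → ∀ x ∈ A, ∀ y ∈ A', r ≤ dist x y := by
      rintro j A ⟨i, V, hV, rfl⟩ A' ⟨i', V', hV', rfl⟩ hAA' x hx y hy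
      by_cases hii' : Xi i = Xi i'
      · rw [hii'] at hV
        have hVV' : V ≠ V' := fun he => hAA' (by rw [he])
        exact h𝒱disj (Xi i') ⟨i', rfl⟩ j V hV V' hV' hVV' x hx.1 y hy.1
      · exact hYsep i i' hii' x ⟨(h𝒱sub (Xi i) ⟨i, rfl⟩ j V hV).1 hx.1, hx.2⟩
          y ⟨(h𝒱sub (Xi i') ⟨i', rfl⟩ j V' hV').1 hy.1, hy.2⟩
    have h𝒜cov : ∀ x : X, x ∉ Y → ∃ j, ∃ A ∈ 𝒜 j, x ∈ A := by
      intro x hxY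
      have hxU : x ∈ ⋃ i, Xi i := hcover ▸ Set.mem_univ x
      obtain ⟨i, hxi⟩ := Set.mem_iUnion.mp hxU
      obtain ⟨j, V, hV, hxV⟩ := h𝒱cov (Xi i) ⟨i, rfl⟩ x hxi
      exact ⟨j, V \ Y, ⟨i, V, hV, rfl⟩, ⟨hxV, hxY⟩⟩
    -- absorption
    set near : Set X → Set X → Prop := fun A W => ∃ a ∈ A, ∃ w ∈ W, dist a w < r with hnear
    set Wt : Fin (n+1) → Set X → Set X :=
      fun j W => W ∪ {x | ∃ A ∈ 𝒜 j, near A W ∧ x ∈ A} with hWt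
    set ℱ : Fin (n+1) → Set (Set X) := fun j =>
      {S : Set X | (∃ W ∈ 𝒲X j, S = Wt j W) ∨
        (∃ A ∈ 𝒜 j, (∀ W ∈ 𝒲X j, ¬ near A W) ∧ S = A)} with hℱ
    have hWtnear : ∀ j W, ∀ x ∈ Wt j W, ∃ w ∈ W, dist x w ≤ r + (R:ℝ) := by
      intro j W x hx
      rcases hx with hx | ⟨A, hA, ⟨a, ha, w, hw, haw⟩, hxA⟩
      · exact ⟨x, hx, by simp; positivity⟩
      · refine ⟨w, hw, ?_⟩
        have h1 : dist x a ≤ (R:ℝ) := h𝒜bd j A hA x hxA a ha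
        have h2 : dist x w ≤ dist x a + dist a w := dist_triangle _ _ _
        linarith
    refine ⟨ℱ, |MY| + 2*r + 3*(R:ℝ), ?_, ?_, ?_⟩
    · -- r-disjointness
      rintro j S hS S' hS' hSS' x hx y hy
      show r ≤ dist x y
      rcases hS with ⟨W, hW, rfl⟩ | ⟨A, hA, hAfar, hSA⟩
      · rcases hS' with ⟨W', hW', rfl⟩ | ⟨A', hA', hA'far, hSA'⟩
        · -- two enlarged sets
          have hWW' : W ≠ W' := fun he => hSS' (by rw [he])
          obtain ⟨w, hw, hxw⟩ := hWtnear j W x hx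
          obtain ⟨w', hw', hyw'⟩ := hWtnear j W' y hy
          have h1 := hX1 j W hW W' hW' hWW' w hw w' hw'
          have h2 : dist w w' ≤ dist w x + dist x y + dist y w' := dist_triangle4 _ _ _ _
          rw [dist_comm w x] at h2
          rw [hℓdef] at h1
          linarith
        · -- enlarged vs remaining A'
          subst hSA'
          rcases hx with hx | ⟨A, hA, hAnear, hxA⟩
          · by_contra hlt
            push_neg at hlt
            exact hA'far W hW ⟨y, hy, x, hx, by rw [dist_comm]; linarith⟩
          · have hAA' : A ≠ S' := by
              rintro rfl
              exact hA'far W hW hAnear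
            exact h𝒜disj j A hA S' hA' hAA' x hxA y hy
      · subst hSA
        rcases hS' with ⟨W', hW', rfl⟩ | ⟨A', hA', hA'far, hSA'⟩
        · rcases hy with hy | ⟨A', hA', hA'near, hyA'⟩
          · by_contra hlt
            push_neg at hlt
            exact hAfar W' hW' ⟨x, hx, y, hy, by linarith⟩
          · have hAA' : S ≠ A' := by
              rintro rfl
              exact hAfar W' hW' hA'near
            exact h𝒜disj j S hA A' hA' hAA' x hx y hyA'
        · subst hSA'
          have hAA' : S ≠ S' := hSS'
          exact h𝒜disj j S hA S' hA' hAA' x hx y hy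
    · -- boundedness
      rintro j S hS x hx y hy
      rcases hS with ⟨W, hW, rfl⟩ | ⟨A, hA, _, hSA⟩
      · obtain ⟨w, hw, hxw⟩ := hWtnear j W x hx
        obtain ⟨w', hw', hyw'⟩ := hWtnear j W y hy
        have h1 : dist w w' ≤ MY := hX2 j W hW w hw w' hw'
        have h2 : dist x y ≤ dist x w + dist w w' + dist w' y := dist_triangle4 _ _ _ _
        rw [dist_comm w' y] at h2
        have : MY ≤ |MY| := le_abs_self MY
        have habs : (0:ℝ) ≤ |MY| := abs_nonneg MY
        linarith
      · subst hSA
        have h1 : dist x y ≤ (R:ℝ) := h𝒜bd j S hA x hx y hy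
        have habs : (0:ℝ) ≤ |MY| := abs_nonneg MY
        linarith
    · -- cover
      intro x
      by_cases hxY : x ∈ Y
      · obtain ⟨j, W, hW, hxW⟩ := hX3 x hxY
        exact ⟨j, Wt j W, Or.inl ⟨W, hW, rfl⟩, Or.inl hxW⟩
      · obtain ⟨j, A, hA, hxA⟩ := h𝒜cov x hxY
        by_cases hnear' : ∃ W ∈ 𝒲X j, near A W
        · obtain ⟨W, hW, hAW⟩ := hnear'
          exact ⟨j, Wt j W, Or.inl ⟨W, hW, rfl⟩, Or.inr ⟨A, hA, hAW, hxA⟩⟩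
        · push_neg at hnear'
          exact ⟨j, A, Or.inr ⟨A, hA, hnear', rfl⟩, hxA⟩
  exact sInf_le ⟨n, rfl, main⟩
end
end

section
/- (Finite Union Theorem) Let X be a metric space with X = A ∪ B, where A and B carry the metrics induced from X. Then asdim(X) ≤ max{asdim(A), asdim(B)}. -/
noncomputable section

/-! ### Auxiliary machinery -/

/-- Monotonicity of `AsdimLE` in `n`. -/
lemma AsdimLE.mono' {Y : Type*} {d : Y → Y → ℝ} {m n : ℕ} (h : AsdimLE d m) (hmn : m ≤ n) :
    AsdimLE d n := by
  intro 𝒱 h1 h2 h3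
  obtain ⟨𝒰, u1, u2, u3, u4, u5⟩ := h 𝒱 h1 h2 h3
  exact ⟨𝒰, u1, u2, u3, fun x F hF => le_trans (u4 x F hF) (by omega), u5⟩

/-- The open `r`-neighborhood of a set. -/
def NbS {Y : Type*} [MetricSpace Y] (r : ℝ) (W : Set Y) : Set Y := {z | ∃ w ∈ W, dist z w < r}

/-- `FamP n r R 𝒲` : `𝒲` consists of `n+1` families of `r`-disjoint, `R`-bounded sets. -/
def FamP {Y : Type*} [MetricSpace Y] (n : ℕ) (r R : ℝ) (𝒲 : Fin (n+1) → Set (Set Y)) : Prop :=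
  (∀ i, RDisjoint (fun a b : Y => dist a b) r (𝒲 i)) ∧
  (∀ i, ∀ W ∈ 𝒲 i, ∀ x ∈ W, ∀ y ∈ W, dist x y ≤ R)

/-- Easy direction: existence of `r`-disjoint uniformly bounded colored families for every `r`
implies `AsdimLE`. -/
lemma fam_to_asdim {Y : Type*} [MetricSpace Y] (n : ℕ)
    (h : ∀ r : ℝ, 0 < r → ∃ R : ℝ, ∃ 𝒲 : Fin (n+1) → Set (Set Y),
      FamP n r R 𝒲 ∧ (∀ y : Y, ∃ i, ∃ W ∈ 𝒲 i, y ∈ W)) :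
    AsdimLE (fun a b : Y => dist a b) n := by
  classical
  rintro 𝒱 hcov ⟨D, hD⟩ _hopen
  set s : ℝ := max D 0 + 1 with hs
  have hs0 : 0 < s := by positivity
  have hDs : D < s := lt_of_le_of_lt (le_max_left D 0) (lt_add_one _)
  obtain ⟨R, 𝒲, ⟨hdisj, hbd⟩, hcov'⟩ := h (4 * s) (by linarith)
  set 𝒰 : Set (Set Y) := {U | ∃ i, ∃ W ∈ 𝒲 i, U = NbS s W} ∪ {∅} with h𝒰
  have hmemNb : ∀ (W : Set Y) (z : Y), z ∈ NbS s W ↔ ∃ w ∈ W, dist z w < s := fun _ _ => Iff.rfl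
  refine ⟨𝒰, ?_, ?_, ?_, ?_, ?_⟩
  · -- cover
    intro y
    obtain ⟨i, W, hW, hyW⟩ := hcov' y
    exact ⟨NbS s W, Set.mem_union_left _ ⟨i, W, hW, rfl⟩, ⟨y, hyW, by simpa using hs0⟩⟩
  · -- uniformly bounded
    refine ⟨R + 2 * s, ?_⟩
    intro U hU x hx y hy
    rcases hU with ⟨i, W, hW, rfl⟩ | hU
    · obtain ⟨w, hw, hxw⟩ := hx
      obtain ⟨w', hw', hyw'⟩ := hy
      have h1 : dist w w' ≤ R := hbd i W hW w hw w' hw'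
      have h2 : dist x y ≤ dist x w + dist w w' + dist w' y := dist_triangle4 x w w' y
      have h3 : dist w' y = dist y w' := dist_comm w' y
      linarith
    · simp only [Set.mem_singleton_iff] at hU
      subst hU; exact absurd hx (Set.notMem_empty x)
  · -- open
    intro U hU x hx
    rcases hU with ⟨i, W, hW, rfl⟩ | hU
    · obtain ⟨w, hw, hxw⟩ := hx
      refine ⟨s - dist x w, by linarith, fun y hy => ⟨w, hw, ?_⟩⟩
      have := dist_triangle y x w
      have h3 : dist y x = dist x y := dist_comm y x
      linarith
    · simp only [Set.mem_singleton_iff] at hU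
      subst hU; exact absurd hx (Set.notMem_empty x)
  · -- multiplicity
    intro x F hF
    have key : ∀ U ∈ F, ∃ i : Fin (n+1), ∃ W ∈ 𝒲 i, U = NbS s W := by
      intro U hU
      rcases (hF U hU).1 with ⟨i, W, hW, rfl⟩ | h0
      · exact ⟨i, W, hW, rfl⟩
      · simp only [Set.mem_singleton_iff] at h0
        exact absurd ((hF U hU).2) (by rw [h0]; exact Set.notMem_empty x)
    set g : Set Y → Fin (n+1) := fun U =>
      if hex : ∃ i : Fin (n+1), ∃ W ∈ 𝒲 i, U = NbS s W then hex.choose else ⟨0, Nat.succ_pos n⟩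
      with hg
    have hgspec : ∀ U ∈ F, ∃ W ∈ 𝒲 (g U), U = NbS s W := by
      intro U hU
      have hex := key U hU
      simp only [hg, dif_pos hex]
      exact hex.choose_spec
    have hcard : F.card ≤ (Finset.univ : Finset (Fin (n+1))).card := by
      apply Finset.card_le_card_of_injOn g (fun U _ => Finset.mem_univ _)
      intro U hU U' hU' hgUU
      simp only [Finset.mem_coe] at hU hU'
      obtain ⟨W, hWmem, hUW⟩ := hgspec U hU
      obtain ⟨W', hW'mem, hUW'⟩ := hgspec U' hU'
      by_cases hWW : W = W'
      · rw [hUW, hUW', hWW]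
      · exfalso
        have hxU : x ∈ NbS s W := hUW ▸ (hF U hU).2
        have hxU' : x ∈ NbS s W' := hUW' ▸ (hF U' hU').2
        obtain ⟨w, hw, hxw⟩ := hxU
        obtain ⟨w', hw', hxw'⟩ := hxU'
        have hW'mem2 : W' ∈ 𝒲 (g U) := by rw [hgUU]; exact hW'mem
        have := hdisj (g U) W hWmem W' hW'mem2 hWW w hw w' hw'
        have h3 : dist w w' ≤ dist w x + dist x w' := dist_triangle w x w'
        have h4 : dist w x = dist x w := dist_comm w x
        simp only at this
        linarith
    simpa using hcard
  · -- refines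
    intro V hV
    rcases Set.eq_empty_or_nonempty V with rfl | ⟨x, hxV⟩
    · exact ⟨∅, Set.mem_union_right _ rfl, Set.empty_subset _⟩
    · obtain ⟨i, W, hW, hxW⟩ := hcov' x
      refine ⟨NbS s W, Set.mem_union_left _ ⟨i, W, hW, rfl⟩, fun z hz => ⟨x, hxW, ?_⟩⟩
      have := hD V hV z hz x hxV
      simp only at this
      linarith

open ENNReal

theorem asdim_to_fam {Y : Type*} [MetricSpace Y] (n : ℕ)
    (h : AsdimLE (fun a b : Y => dist a b) n) (r : ℝ) (hr : 0 < r) :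
    ∃ R : ℝ, ∃ 𝒲 : Fin (n+1) → Set (Set Y),
      FamP n r R 𝒲 ∧ (∀ y : Y, ∃ i, ∃ W ∈ 𝒲 i, y ∈ W) := by
  classical
  set L : ℝ := (2 * n + 2) * r with hL
  have hL0 : 0 < L := by positivity
  obtain ⟨𝒰, hUcov, ⟨R, hR⟩, hUopen, hUmult, hUref⟩ :=
    h {V | ∃ y : Y, V = Metric.ball y L}
      (fun y => ⟨Metric.ball y L, ⟨y, rfl⟩, Metric.mem_ball_self hL0⟩)
      (⟨2 * L, by
        rintro V ⟨y, rfl⟩ x hx z hz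
        rw [Metric.mem_ball] at hx hz
        have h1 : dist x z ≤ dist x y + dist y z := dist_triangle x y z
        have h2 : dist y z = dist z y := dist_comm y z
        simp only
        linarith⟩)
      (by
        rintro V ⟨y, rfl⟩ x hx
        rw [Metric.mem_ball] at hx
        refine ⟨L - dist x y, by linarith, fun z hz => ?_⟩
        rw [Metric.mem_ball]
        have h1 : dist z y ≤ dist z x + dist x y := dist_triangle z x y
        have h2 : dist z x = dist x z := dist_comm z x
        simp only at hz
        linarith)
  have hleb : ∀ y : Y, ∃ U ∈ 𝒰, Metric.ball y L ⊆ U := fun y => hUref _ ⟨y, rfl⟩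
  set δ : ℝ≥0∞ := ENNReal.ofReal r with hδ
  have hδ0 : 0 < δ := ENNReal.ofReal_pos.2 hr
  have hδtop : δ ≠ ⊤ := ENNReal.ofReal_ne_top
  set m : Y → Set Y → ℝ≥0∞ := fun x V => EMetric.infEdist x Vᶜ with hm
  have fmem : ∀ (x : Y) (V : Set Y), 0 < m x V → x ∈ V := by
    intro x V hpos
    by_contra hx
    simp only [hm] at hpos
    rw [show EMetric.infEdist x Vᶜ = 0 from EMetric.infEdist_zero_of_mem (Set.mem_compl hx)] at hpos
    exact lt_irrefl _ hpos
  have flip : ∀ (x y : Y) (V : Set Y), m x V ≤ m y V + edist x y :=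
    fun x y V => EMetric.infEdist_le_infEdist_add_edist
  have jcalc : ∀ j : ℕ, ((2*j+1 : ℕ) : ℝ≥0∞) * δ = ((2*j : ℕ) : ℝ≥0∞) * δ + δ := by
    intro j; push_cast; ring
  have jne : ∀ j : ℕ, ((2*j : ℕ) : ℝ≥0∞) * δ ≠ ⊤ :=
    fun j => ENNReal.mul_ne_top (ENNReal.natCast_ne_top _) hδtop
  have jlt : ∀ j : ℕ, ((2*j : ℕ) : ℝ≥0∞) * δ < ((2*j+1 : ℕ) : ℝ≥0∞) * δ := by
    intro j
    rw [jcalc j]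
    exact ENNReal.lt_add_right (jne j) (ne_of_gt hδ0)
  have mon : ∀ j k : ℕ, j ≤ k → ((j : ℕ) : ℝ≥0∞) * δ ≤ ((k : ℕ) : ℝ≥0∞) * δ :=
    fun j k hjk => mul_le_mul_left (by exact_mod_cast hjk) δ
  set Wset : Finset (Set Y) → Set Y := fun σ =>
    {x | ∃ j : ℕ, (∀ V ∈ σ, ((2*j+1 : ℕ) : ℝ≥0∞) * δ ≤ m x V) ∧
      (∀ V ∈ 𝒰, V ∉ σ → m x V ≤ ((2*j : ℕ) : ℝ≥0∞) * δ)} with hWset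
  set 𝒲 : Fin (n+1) → Set (Set Y) := fun i =>
    {W | ∃ σ : Finset (Set Y), ↑σ ⊆ 𝒰 ∧ σ.card = i.1 + 1 ∧ W = Wset σ} with h𝒲
  have hδle : ∀ j : ℕ, δ ≤ ((2*j+1 : ℕ) : ℝ≥0∞) * δ := by
    intro j
    calc δ = 1 * δ := (one_mul δ).symm
    _ ≤ ((2*j+1 : ℕ) : ℝ≥0∞) * δ := mul_le_mul_left (by exact_mod_cast Nat.one_le_iff_ne_zero.2 (by omega)) δ
  refine ⟨R, 𝒲, ⟨?_, ?_⟩, ?_⟩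
  · -- disjointness
    intro i W₁ hW₁ W₂ hW₂ hne x hx y hy
    obtain ⟨σ, hσU, hσc, rfl⟩ := hW₁
    obtain ⟨τ, hτU, hτc, rfl⟩ := hW₂
    have hστ : σ ≠ τ := fun e => hne (by rw [e])
    obtain ⟨j, hx1, hx2⟩ := hx
    obtain ⟨k, hy1, hy2⟩ := hy
    simp only
    by_contra hlt
    push_neg at hlt
    have hedist : edist x y < δ := by
      rw [edist_dist, hδ]
      exact (ENNReal.ofReal_lt_ofReal_iff hr).2 hlt
    rcases le_total k j with hkj | hjk
    · have hss : ¬ σ ⊆ τ := fun hsub => hστ (Finset.eq_of_subset_of_card_le hsub (by omega))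
      obtain ⟨V, hVσ, hVτ⟩ := Finset.not_subset.mp hss
      have h1 := hx1 V hVσ
      have h2 := hy2 V (hσU hVσ) hVτ
      have hchain : m x V < ((2*j+1 : ℕ) : ℝ≥0∞) * δ := by
        calc m x V ≤ m y V + edist x y := flip x y V
        _ ≤ ((2*k : ℕ) : ℝ≥0∞) * δ + edist x y := add_le_add_left h2 _
        _ < ((2*k : ℕ) : ℝ≥0∞) * δ + δ := ENNReal.add_lt_add_left (jne k) hedist
        _ = ((2*k+1 : ℕ) : ℝ≥0∞) * δ := (jcalc k).symm
        _ ≤ ((2*j+1 : ℕ) : ℝ≥0∞) * δ := mon _ _ (by omega)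
      exact absurd h1 (not_le.2 hchain)
    · have hss : ¬ τ ⊆ σ := fun hsub => hστ (Finset.eq_of_subset_of_card_le hsub (by omega)).symm
      obtain ⟨V, hVτ, hVσ⟩ := Finset.not_subset.mp hss
      have h1 := hy1 V hVτ
      have h2 := hx2 V (hτU hVτ) hVσ
      have hchain : m y V < ((2*k+1 : ℕ) : ℝ≥0∞) * δ := by
        calc m y V ≤ m x V + edist y x := flip y x V
        _ ≤ ((2*j : ℕ) : ℝ≥0∞) * δ + edist y x := add_le_add_left h2 _
        _ < ((2*j : ℕ) : ℝ≥0∞) * δ + δ := ENNReal.add_lt_add_left (jne j) (edist_comm y x ▸ hedist)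
        _ = ((2*j+1 : ℕ) : ℝ≥0∞) * δ := (jcalc j).symm
        _ ≤ ((2*k+1 : ℕ) : ℝ≥0∞) * δ := mon _ _ (by omega)
      exact absurd h1 (not_le.2 hchain)
  · -- boundedness
    intro i W hW x hx y hy
    obtain ⟨σ, hσU, hσc, rfl⟩ := hW
    obtain ⟨V, hV⟩ := Finset.card_pos.mp (show 0 < σ.card by omega)
    obtain ⟨j, hx1, _⟩ := hx
    obtain ⟨k, hy1, _⟩ := hy
    have hxV : x ∈ V := fmem x V (lt_of_lt_of_le (lt_of_lt_of_le hδ0 (hδle j)) (hx1 V hV))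
    have hyV : y ∈ V := fmem y V (lt_of_lt_of_le (lt_of_lt_of_le hδ0 (hδle k)) (hy1 V hV))
    exact hR V (hσU hV) x hxV y hyV
  · -- covering
    intro x
    set T : Set (Set Y) := {V | V ∈ 𝒰 ∧ x ∈ V} with hT
    have hTfin : T.Finite := by
      by_contra hinf
      obtain ⟨F, hFsub, hFcard⟩ :=
        Set.Infinite.exists_subset_card_eq (s := T) hinf (n + 2)
      have := hUmult x F (fun V hV => hFsub hV)
      omega
    set t : Finset (Set Y) := hTfin.toFinset with ht
    have htmem : ∀ V : Set Y, V ∈ t ↔ V ∈ 𝒰 ∧ x ∈ V := by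
      intro V; rw [ht, Set.Finite.mem_toFinset]; rfl
    have htcard : t.card ≤ n + 1 := hUmult x t (fun V hV => (htmem V).1 hV)
    set sc : ℕ → ℕ := fun j => (t.filter fun V => ((2*j : ℕ) : ℝ≥0∞) * δ < m x V).card with hsc
    set uc : ℕ → ℕ := fun j => (t.filter fun V => ((2*j+1 : ℕ) : ℝ≥0∞) * δ ≤ m x V).card with huc
    have hus : ∀ j, uc j ≤ sc j := by
      intro j
      apply Finset.card_le_card
      intro V hV
      rw [Finset.mem_filter] at hV ⊢
      exact ⟨hV.1, lt_of_lt_of_le (jlt j) hV.2⟩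
    have hsu : ∀ j, sc (j+1) ≤ uc j := by
      intro j
      apply Finset.card_le_card
      intro V hV
      rw [Finset.mem_filter] at hV ⊢
      refine ⟨hV.1, le_of_lt (lt_of_le_of_lt ?_ hV.2)⟩
      exact mon (2*j+1) (2*(j+1)) (by omega)
    have hs0 : sc 0 ≤ n + 1 := le_trans (Finset.card_le_card (Finset.filter_subset _ _)) htcard
    have hun : 1 ≤ uc n := by
      obtain ⟨U, hU, hball⟩ := hleb x
      have hxt : U ∈ t := (htmem U).2 ⟨hU, hball (Metric.mem_ball_self hL0)⟩
      have hLle : ENNReal.ofReal L ≤ m x U := by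
        show ENNReal.ofReal L ≤ EMetric.infEdist x Uᶜ
        apply EMetric.le_infEdist.2
        intro z hz
        have hz' : z ∉ Metric.ball x L := fun hmem => hz (hball hmem)
        rw [Metric.mem_ball, not_lt] at hz'
        rw [edist_dist]
        exact ENNReal.ofReal_le_ofReal (by rw [dist_comm]; exact hz')
      have hcast : ENNReal.ofReal L = ((2*n+2 : ℕ) : ℝ≥0∞) * δ := by
        rw [hL, hδ, ENNReal.ofReal_mul (by positivity)]
        congr 1
        rw [show ((2*n+2 : ℕ) : ℝ≥0∞) = ENNReal.ofReal ((2*n+2 : ℕ) : ℝ) by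
          rw [ENNReal.ofReal_natCast]]
        congr 1
        push_cast
        ring
      have hle2 : ((2*n+1 : ℕ) : ℝ≥0∞) * δ ≤ m x U := by
        refine le_trans (mon (2*n+1) (2*n+2) (by omega)) ?_
        rw [← hcast]; exact hLle
      have : U ∈ t.filter fun V => ((2*n+1 : ℕ) : ℝ≥0∞) * δ ≤ m x V :=
        Finset.mem_filter.2 ⟨hxt, hle2⟩
      rw [huc]
      exact Finset.card_pos.2 ⟨U, this⟩
    have pig : ∃ j, j ≤ n ∧ sc j = uc j := by
      by_contra hno
      push_neg at hno
      have hstep : ∀ j, j ≤ n → uc j + 1 ≤ sc j := by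
        intro j hj
        have h1 := hus j
        have h2 := hno j hj
        omega
      have key : ∀ k, k ≤ n → k + 2 ≤ sc (n - k) := by
        intro k
        induction k with
        | zero =>
          intro _
          have h1 := hstep n le_rfl
          simpa using by omega
        | succ k ih =>
          intro hk
          have h1 := hstep (n - (k+1)) (by omega)
          have h2 := hsu (n - (k+1))
          have h3 : n - (k+1) + 1 = n - k := by omega
          rw [h3] at h2
          have h4 := ih (by omega)
          omega
      have hfin := key n le_rfl
      simp only [Nat.sub_self] at hfin
      omega
    obtain ⟨j, hjn, hju⟩ := pig
    set σ : Finset (Set Y) := t.filter (fun V => ((2*j+1 : ℕ) : ℝ≥0∞) * δ ≤ m x V) with hσ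
    have husub : σ ⊆ t.filter fun V => ((2*j : ℕ) : ℝ≥0∞) * δ < m x V := by
      intro V hV
      rw [hσ, Finset.mem_filter] at hV
      rw [Finset.mem_filter]
      exact ⟨hV.1, lt_of_lt_of_le (jlt j) hV.2⟩
    have hσeq : σ = t.filter fun V => ((2*j : ℕ) : ℝ≥0∞) * δ < m x V := by
      apply Finset.eq_of_subset_of_card_le husub
      rw [← hσ] at *
      have : (t.filter fun V => ((2*j : ℕ) : ℝ≥0∞) * δ < m x V).card = sc j := rfl
      have h2 : σ.card = uc j := rfl
      omega
    have hσ1 : 1 ≤ σ.card := by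
      have hmono : (t.filter fun V => ((2*n+1 : ℕ) : ℝ≥0∞) * δ ≤ m x V) ⊆ σ := by
        intro V hV
        rw [Finset.mem_filter] at hV
        rw [hσ, Finset.mem_filter]
        exact ⟨hV.1, le_trans (mon (2*j+1) (2*n+1) (by omega)) hV.2⟩
      have := Finset.card_le_card hmono
      have h2 : (t.filter fun V => ((2*n+1 : ℕ) : ℝ≥0∞) * δ ≤ m x V).card = uc n := rfl
      omega
    have hσtop : σ.card ≤ n + 1 := le_trans (Finset.card_le_card (Finset.filter_subset _ _)) htcard
    refine ⟨⟨σ.card - 1, by omega⟩, Wset σ, ⟨σ, ?_, by simp; omega, rfl⟩, ?_⟩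
    · intro V hV
      rw [Finset.mem_coe] at hV
      exact ((htmem V).1 (Finset.filter_subset _ _ hV)).1
    · refine ⟨j, ?_, ?_⟩
      · intro V hV
        rw [hσ, Finset.mem_filter] at hV
        exact hV.2
      · intro V hVU hVσ
        by_contra hgt
        push_neg at hgt
        have hxV : x ∈ V := fmem x V (lt_of_le_of_lt zero_le hgt)
        have : V ∈ σ := by
          rw [hσeq, Finset.mem_filter]
          exact ⟨(htmem V).2 ⟨hVU, hxV⟩, hgt⟩
        exact hVσ this

/-- Push colored families from a subtype to the ambient space. -/
lemma famOn_of_subtype {X : Type*} [MetricSpace X] (A : Set X) (n : ℕ)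
    (h : AsdimLE (fun a b : A => dist (a : X) (b : X)) n) (r : ℝ) (hr : 0 < r) :
    ∃ R : ℝ, ∃ 𝒲 : Fin (n+1) → Set (Set X),
      FamP n r R 𝒲 ∧ (∀ x ∈ A, ∃ i, ∃ W ∈ 𝒲 i, x ∈ W) := by
  have h' : AsdimLE (fun a b : A => dist a b) n := by
    have he : (fun a b : A => dist (a : X) (b : X)) = (fun a b : A => dist a b) := by
      funext a b; exact (Subtype.dist_eq a b).symm
    rwa [he] at h
  obtain ⟨R, 𝒲, ⟨hdisj, hbd⟩, hcov⟩ := asdim_to_fam n h' r hr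
  refine ⟨R, fun i => (fun W => Subtype.val '' W) '' 𝒲 i, ⟨?_, ?_⟩, ?_⟩
  · intro i V hV W hW hVW x hx y hy
    obtain ⟨V', hV', rfl⟩ := hV
    obtain ⟨W', hW', rfl⟩ := hW
    obtain ⟨v, hv, rfl⟩ := hx
    obtain ⟨w, hw, rfl⟩ := hy
    have hne : V' ≠ W' := fun e => hVW (by rw [e])
    have := hdisj i V' hV' W' hW' hne v hv w hw
    simp only at this ⊢
    rwa [Subtype.dist_eq] at this
  · intro i W hW x hx y hy
    obtain ⟨W', hW', rfl⟩ := hW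
    obtain ⟨v, hv, rfl⟩ := hx
    obtain ⟨w, hw, rfl⟩ := hy
    have := hbd i W' hW' v hv w hw
    rwa [Subtype.dist_eq] at this
  · intro x hx
    obtain ⟨i, W, hW, hmem⟩ := hcov ⟨x, hx⟩
    exact ⟨i, Subtype.val '' W, ⟨W, hW, rfl⟩, ⟨⟨x, hx⟩, hmem, rfl⟩⟩

/-- The core of the finite union theorem, at the level of colored families. -/
lemma fam_union {X : Type*} [MetricSpace X] (A B : Set X) (n : ℕ)
    (hA : ∀ r : ℝ, 0 < r → ∃ R, ∃ 𝒲 : Fin (n+1) → Set (Set X),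
      FamP n r R 𝒲 ∧ (∀ x ∈ A, ∃ i, ∃ W ∈ 𝒲 i, x ∈ W))
    (hB : ∀ r : ℝ, 0 < r → ∃ R, ∃ 𝒲 : Fin (n+1) → Set (Set X),
      FamP n r R 𝒲 ∧ (∀ x ∈ B, ∃ i, ∃ W ∈ 𝒲 i, x ∈ W))
    (r : ℝ) (hr : 0 < r) :
    ∃ R, ∃ 𝒲 : Fin (n+1) → Set (Set X),
      FamP n r R 𝒲 ∧ (∀ x ∈ A ∪ B, ∃ i, ∃ W ∈ 𝒲 i, x ∈ W) := by
  classical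
  obtain ⟨R₁', 𝒜, ⟨hAd, hAb⟩, hAc⟩ := hA (3 * r) (by linarith)
  set R₁ : ℝ := max R₁' 0 with hR₁
  have hR₁0 : 0 ≤ R₁ := le_max_right _ _
  have hAb' : ∀ i, ∀ W ∈ 𝒜 i, ∀ x ∈ W, ∀ y ∈ W, dist x y ≤ R₁ :=
    fun i W hW x hx y hy => le_trans (hAb i W hW x hx y hy) (le_max_left _ _)
  obtain ⟨R₂, ℬ, ⟨hBd, hBb⟩, hBc⟩ := hB (2 * R₁ + 7 * r) (by linarith)
  -- closeness relation and saturation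
  set cl : Set X → Set X → Prop := fun A' B' => ∃ a ∈ A', ∃ b ∈ B', dist a b < 2 * r with hcl
  set sat : Fin (n+1) → Set X → Set X :=
    (fun i B' => B' ∪ {z | ∃ A' ∈ 𝒜 i, cl A' B' ∧ z ∈ NbS r A'}) with hsat
  set 𝒞 : Fin (n+1) → Set (Set X) := (fun i =>
    {C | ∃ B' ∈ ℬ i, C = sat i B'} ∪
    {C | ∃ A' ∈ 𝒜 i, (∀ B' ∈ ℬ i, ¬ cl A' B') ∧ C = NbS r A'}) with h𝒞
  -- every point of a saturated set is close to the core
  have k1 : ∀ (i : Fin (n+1)) (B' : Set X), B' ∈ ℬ i →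
      ∀ x ∈ sat i B', ∃ b ∈ B', dist x b ≤ R₁ + 3 * r := by
    intro i B' hB' x hx
    rcases hx with hx | ⟨A', hA', hclose, a, ha, hxa⟩
    · exact ⟨x, hx, by simp only [dist_self]; linarith⟩
    · obtain ⟨a₀, ha₀, b, hb, hab⟩ := hclose
      have h1 : dist a a₀ ≤ R₁ := hAb' i A' hA' a ha a₀ ha₀
      have h2 : dist x b ≤ dist x a + dist a a₀ + dist a₀ b := dist_triangle4 x a a₀ b
      exact ⟨b, hb, by linarith⟩
  refine ⟨max R₂ 0 + 2 * (R₁ + 3 * r), 𝒞, ⟨?_, ?_⟩, ?_⟩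
  · -- r-disjointness
    intro i C₁ hC₁ C₂ hC₂ hne x hx y hy
    simp only
    by_contra hlt
    push_neg at hlt
    rcases hC₁ with ⟨B₁, hB₁, rfl⟩ | ⟨A₁, hA₁, hfree₁, rfl⟩
    · rcases hC₂ with ⟨B₂, hB₂, rfl⟩ | ⟨A₂, hA₂, hfree₂, rfl⟩
      · -- sat vs sat
        have hBne : B₁ ≠ B₂ := fun e => hne (by rw [e])
        obtain ⟨b₁, hb₁, hxb₁⟩ := k1 i B₁ hB₁ x hx
        obtain ⟨b₂, hb₂, hyb₂⟩ := k1 i B₂ hB₂ y hy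
        have hd := hBd i B₁ hB₁ B₂ hB₂ hBne b₁ hb₁ b₂ hb₂
        simp only at hd
        have h2 : dist b₁ b₂ ≤ dist b₁ x + dist x y + dist y b₂ := dist_triangle4 b₁ x y b₂
        have h3 : dist b₁ x = dist x b₁ := dist_comm b₁ x
        have h4 : dist y b₂ = dist y b₂ := rfl
        linarith
      · -- sat vs free neighborhood
        obtain ⟨a₂, ha₂, hya₂⟩ := hy
        rcases hx with hx | ⟨A₁, hA₁, hclose₁, a₁, ha₁, hxa₁⟩
        · -- x in the core B₁
          apply hfree₂ B₁ hB₁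
          refine ⟨a₂, ha₂, x, hx, ?_⟩
          have := dist_triangle a₂ y x
          have h3 : dist a₂ y = dist y a₂ := dist_comm a₂ y
          have h4 : dist y x = dist x y := dist_comm y x
          linarith
        · -- x in a neighborhood attached to B₁
          by_cases hAA : A₁ = A₂
          · subst hAA
            exact hfree₂ B₁ hB₁ hclose₁
          · have hd := hAd i A₁ hA₁ A₂ hA₂ hAA a₁ ha₁ a₂ ha₂
            simp only at hd
            have h2 : dist a₁ a₂ ≤ dist a₁ x + dist x y + dist y a₂ := dist_triangle4 a₁ x y a₂
            have h3 : dist a₁ x = dist x a₁ := dist_comm a₁ x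
            linarith
    · rcases hC₂ with ⟨B₂, hB₂, rfl⟩ | ⟨A₂, hA₂, hfree₂, rfl⟩
      · -- free neighborhood vs sat (mirror case)
        obtain ⟨a₁, ha₁, hxa₁⟩ := hx
        rcases hy with hy | ⟨A₂, hA₂, hclose₂, a₂, ha₂, hya₂⟩
        · apply hfree₁ B₂ hB₂
          refine ⟨a₁, ha₁, y, hy, ?_⟩
          have := dist_triangle a₁ x y
          have h3 : dist a₁ x = dist x a₁ := dist_comm a₁ x
          linarith
        · by_cases hAA : A₁ = A₂
          · subst hAA
            exact hfree₁ B₂ hB₂ hclose₂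
          · have hd := hAd i A₁ hA₁ A₂ hA₂ hAA a₁ ha₁ a₂ ha₂
            simp only at hd
            have h2 : dist a₁ a₂ ≤ dist a₁ x + dist x y + dist y a₂ := dist_triangle4 a₁ x y a₂
            have h3 : dist a₁ x = dist x a₁ := dist_comm a₁ x
            linarith
      · -- free vs free
        have hAne : A₁ ≠ A₂ := fun e => hne (by rw [e])
        obtain ⟨a₁, ha₁, hxa₁⟩ := hx
        obtain ⟨a₂, ha₂, hya₂⟩ := hy
        have hd := hAd i A₁ hA₁ A₂ hA₂ hAne a₁ ha₁ a₂ ha₂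
        simp only at hd
        have h2 : dist a₁ a₂ ≤ dist a₁ x + dist x y + dist y a₂ := dist_triangle4 a₁ x y a₂
        have h3 : dist a₁ x = dist x a₁ := dist_comm a₁ x
        linarith
  · -- boundedness
    intro i C hC x hx y hy
    rcases hC with ⟨B', hB', rfl⟩ | ⟨A', hA', _, rfl⟩
    · obtain ⟨b₁, hb₁, hxb₁⟩ := k1 i B' hB' x hx
      obtain ⟨b₂, hb₂, hyb₂⟩ := k1 i B' hB' y hy
      have h1 : dist b₁ b₂ ≤ R₂ := hBb i B' hB' b₁ hb₁ b₂ hb₂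
      have h1' : dist b₁ b₂ ≤ max R₂ 0 := le_trans h1 (le_max_left _ _)
      have h2 : dist x y ≤ dist x b₁ + dist b₁ b₂ + dist b₂ y := dist_triangle4 x b₁ b₂ y
      have h3 : dist b₂ y = dist y b₂ := dist_comm b₂ y
      linarith
    · obtain ⟨a₁, ha₁, hxa₁⟩ := hx
      obtain ⟨a₂, ha₂, hya₂⟩ := hy
      have h1 : dist a₁ a₂ ≤ R₁ := hAb' i A' hA' a₁ ha₁ a₂ ha₂
      have h2 : dist x y ≤ dist x a₁ + dist a₁ a₂ + dist a₂ y := dist_triangle4 x a₁ a₂ y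
      have h3 : dist a₂ y = dist y a₂ := dist_comm a₂ y
      have h4 : 0 ≤ max R₂ 0 := le_max_right _ _
      linarith
  · -- covering A ∪ B
    intro x hx
    rcases hx with hxA | hxB
    · obtain ⟨i, A', hA', hxA'⟩ := hAc x hxA
      have hxNb : x ∈ NbS r A' := ⟨x, hxA', by simpa using hr⟩
      by_cases hcl' : ∃ B' ∈ ℬ i, cl A' B'
      · obtain ⟨B', hB', hclose⟩ := hcl'
        exact ⟨i, sat i B', Set.mem_union_left _ ⟨B', hB', rfl⟩,
          Set.mem_union_right _ ⟨A', hA', hclose, hxNb⟩⟩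
      · push_neg at hcl'
        exact ⟨i, NbS r A', Set.mem_union_right _ ⟨A', hA', hcl', rfl⟩, hxNb⟩
    · obtain ⟨i, B', hB', hxB'⟩ := hBc x hxB
      exact ⟨i, sat i B', Set.mem_union_left _ ⟨B', hB', rfl⟩, Set.mem_union_left _ hxB'⟩

/-- **Finite Union Theorem.** If `X = A ∪ B` (with `A`, `B` carrying the induced metrics),
then `asdim(X) ≤ max {asdim(A), asdim(B)}`. -/
theorem asdim_union_le {X : Type*} [MetricSpace X] (A B : Set X) (hAB : A ∪ B = Set.univ) :
    asdim (fun x y : X => dist x y) ≤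
      max (asdim (fun a b : A => dist (a : X) (b : X)))
        (asdim (fun a b : B => dist (a : X) (b : X))) := by
  classical
  set dA := fun a b : A => dist (a : X) (b : X) with hdA
  set dB := fun a b : B => dist (a : X) (b : X) with hdB
  by_cases htop : max (asdim dA) (asdim dB) = ⊤
  · rw [htop]; exact le_top
  have haA : asdim dA ≠ ⊤ := fun h => htop (top_le_iff.mp (h ▸ le_max_left _ _))
  have haB : asdim dB ≠ ⊤ := fun h => htop (top_le_iff.mp (h ▸ le_max_right _ _))
  have hSA : ∃ m : ℕ, AsdimLE dA m := by
    by_contra hno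
    push_neg at hno
    have he : {k : ℕ∞ | ∃ m : ℕ, k = (m : ℕ∞) ∧ AsdimLE dA m} = ∅ := by
      ext k
      simp only [Set.mem_setOf_eq, Set.mem_empty_iff_false, iff_false, not_exists]
      rintro m ⟨_, hm⟩
      exact hno m hm
    exact haA (by rw [asdim, he, sInf_empty])
  have hSB : ∃ m : ℕ, AsdimLE dB m := by
    by_contra hno
    push_neg at hno
    have he : {k : ℕ∞ | ∃ m : ℕ, k = (m : ℕ∞) ∧ AsdimLE dB m} = ∅ := by
      ext k
      simp only [Set.mem_setOf_eq, Set.mem_empty_iff_false, iff_false, not_exists]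
      rintro m ⟨_, hm⟩
      exact hno m hm
    exact haB (by rw [asdim, he, sInf_empty])
  set mA := Nat.find hSA with hmA
  set mB := Nat.find hSB with hmB
  have hAle : (mA : ℕ∞) ≤ asdim dA := by
    apply le_sInf
    rintro k ⟨m, rfl, hm⟩
    exact_mod_cast Nat.find_min' hSA hm
  have hBle : (mB : ℕ∞) ≤ asdim dB := by
    apply le_sInf
    rintro k ⟨m, rfl, hm⟩
    exact_mod_cast Nat.find_min' hSB hm
  set n := max mA mB with hn
  have hA' : AsdimLE dA n := (Nat.find_spec hSA).mono' (le_max_left _ _)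
  have hB' : AsdimLE dB n := (Nat.find_spec hSB).mono' (le_max_right _ _)
  have hX : AsdimLE (fun x y : X => dist x y) n := by
    apply fam_to_asdim
    intro r hr
    obtain ⟨R, 𝒲, hfam, hcov⟩ :=
      fam_union A B n (famOn_of_subtype A n hA') (famOn_of_subtype B n hB') r hr
    refine ⟨R, 𝒲, hfam, fun y => hcov y ?_⟩
    rw [hAB]; trivial
  have h1 : asdim (fun x y : X => dist x y) ≤ (n : ℕ∞) :=
    sInf_le ⟨n, rfl, hX⟩
  refine le_trans h1 ?_
  have h2 : (n : ℕ∞) = max (mA : ℕ∞) (mB : ℕ∞) := by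
    rcases le_total mA mB with hle | hle
    · rw [hn, max_eq_right hle, max_eq_right (show (mA:ℕ∞) ≤ (mB:ℕ∞) by exact_mod_cast hle)]
    · rw [hn, max_eq_left hle, max_eq_left (show (mB:ℕ∞) ≤ (mA:ℕ∞) by exact_mod_cast hle)]
  rw [h2]
  exact max_le_max hAle hBle
end
end
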